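/- arXiv:2312.12257 — 6 statements merged into one kernel-verified Lean document; each statement's English description precedes it below -/
import Mathlib

section
/- Let X be a topological space, Y a set, and F a nowhere constant family of maps from X to Y. Let B be a π-base of X. For each f ∈ F set B_f = {B ∈ B : f is not constant on B} and U_f = ⋃(B \ B_f). Let A be a pairwise disjoint family of subsets of Y such that for every f ∈ F, every B ∈ B_f, and every A ∈ A we have A ∩ f[B \ U_f] ≠ ∅. Then there is a family {D(A) : A ∈ A}, indexed by A, of pairwise disjoint dense subsets of X; in particular X is |A|-resolvable. -/
open Set

/-- **Theorem 2.1 (general resolvability theorem).**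
Let `F` be a nowhere constant family of maps of the topological space `X` to the set `Y`,
let `𝓑` be a π-base of `X`, and for `f ∈ F` put `𝓑_f = {B ∈ 𝓑 : f is not constant on B}`
and `U_f = ⋃ (𝓑 \ 𝓑_f)`. If `𝓐` is a pairwise disjoint family of subsets of `Y` such that
`A ∩ f[B \ U_f] ≠ ∅` for all `f ∈ F`, `B ∈ 𝓑_f`, `A ∈ 𝓐`, then there is a family
`{D(A) : A ∈ 𝓐}` of pairwise disjoint dense subsets of `X`. -/
theorem general_resolvability {X Y : Type*} [TopologicalSpace X]
    (F : Set (X → Y)) (𝓑 : Set (Set X)) (𝓐 : Set (Set Y))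
    (hNWC : ∀ U : Set X, IsOpen U → U.Nonempty → ∃ f ∈ F, (f '' U).Nontrivial)
    (h𝓑open : ∀ B ∈ 𝓑, IsOpen B)
    (h𝓑ne : ∀ B ∈ 𝓑, B.Nonempty)
    (h𝓑base : ∀ U : Set X, IsOpen U → U.Nonempty → ∃ B ∈ 𝓑, B ⊆ U)
    (h𝓐 : 𝓐.Pairwise fun A A' => Disjoint A A')
    (hmain : ∀ f ∈ F, ∀ B ∈ 𝓑, (f '' B).Nontrivial → ∀ A ∈ 𝓐,
      (A ∩ f '' (B \ ⋃₀ {B' ∈ 𝓑 | ¬ (f '' B').Nontrivial})).Nonempty) :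
    ∃ D : Set Y → Set X, (∀ A ∈ 𝓐, Dense (D A)) ∧
      𝓐.Pairwise fun A A' => Disjoint (D A) (D A') := by
  classical
  -- `U f` is the union of the members of `𝓑` on which `f` is constant.
  set U : (X → Y) → Set X := fun f => ⋃₀ {B' ∈ 𝓑 | ¬ (f '' B').Nontrivial} with hU
  -- well-order the maps
  let r : (X → Y) → (X → Y) → Prop := WellOrderingRel
  have inst : IsWellOrder (X → Y) r := WellOrderingRel.isWellOrder
  have wf : WellFounded r := inst.wf
  -- `S x` : maps in `F` whose constancy-union misses `x`
  set S : X → Set (X → Y) := fun x => {f | f ∈ F ∧ x ∉ U f} with hS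
  -- `D A` : points whose `r`-least map in `S x` sends them into `A`
  refine ⟨fun A => {x | ∃ h : (S x).Nonempty, (wf.min (S x) h) x ∈ A}, ?_, ?_⟩
  · -- density
    intro A hA
    rw [dense_iff_inter_open]
    intro V hV hVne
    obtain ⟨B, hB, hBV⟩ := h𝓑base V hV hVne
    -- maps nonconstant on `B`
    have hTne : {f | f ∈ F ∧ (f '' B).Nontrivial}.Nonempty := by
      obtain ⟨f, hf, hnt⟩ := hNWC B (h𝓑open B hB) (h𝓑ne B hB)
      exact ⟨f, hf, hnt⟩
    set g := wf.min _ hTne with hg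
    obtain ⟨hgF, hgnt⟩ := wf.min_mem _ hTne
    obtain ⟨y, hyA, x, ⟨hxB, hxU⟩, hgx⟩ := hmain g hgF B hB hgnt A hA
    have hxS : (S x).Nonempty := ⟨g, hgF, hxU⟩
    -- the least element of `S x` is `g`
    have hmem := wf.min_mem (S x) hxS
    set f₀ := wf.min (S x) hxS with hf₀
    have hf₀F : f₀ ∈ F := hmem.1
    have hf₀U : x ∉ U f₀ := hmem.2
    -- `f₀` is nonconstant on `B`, since `x ∈ B ∈ 𝓑` and `x ∉ U f₀`
    have hf₀nt : (f₀ '' B).Nontrivial := by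
      by_contra hcon
      exact hf₀U ⟨B, ⟨hB, hcon⟩, hxB⟩
    have h1 : ¬ r f₀ g := wf.not_lt_min {f | f ∈ F ∧ (f '' B).Nontrivial} ⟨hf₀F, hf₀nt⟩
    have h2 : ¬ r g f₀ := wf.not_lt_min (S x) ⟨hgF, hxU⟩
    have heq : f₀ = g := by
      rcases trichotomous_of r f₀ g with h | h | h
      · exact absurd h h1
      · exact h
      · exact absurd h h2
    refine ⟨x, hBV hxB, hxS, ?_⟩
    show f₀ x ∈ A
    rw [heq, hgx]
    exact hyA
  · -- pairwise disjointness
    intro A hA A' hA' hne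
    rw [Set.disjoint_left]
    rintro x ⟨h1, hx1⟩ ⟨h2, hx2⟩
    exact Set.disjoint_left.mp (h𝓐 hA hA' hne) hx1 hx2
end

section
/- Let X be a topological space, B a π-base of X consisting of connected sets, and f : X → ℝ continuous. Set B_f = {B ∈ B : f is not constant on B} and U_f = ⋃(B \ B_f). Then for every B ∈ B_f one has f[B] = f[B \ U_f]. -/
open Set

/-- **The Claim in Corollary 2.2.** Let `𝓑` be a π-base of `X` consisting of connected
sets and `f : X → ℝ` continuous. With `𝓑_f = {B ∈ 𝓑 : f not constant on B}` and
`U_f = ⋃ (𝓑 \ 𝓑_f)`, for every `B ∈ 𝓑_f` we have `f[B] = f[B \ U_f]`. -/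
theorem image_eq_image_diff_const_union {X : Type*} [TopologicalSpace X]
    (𝓑 : Set (Set X))
    (h𝓑open : ∀ B ∈ 𝓑, IsOpen B)
    (h𝓑ne : ∀ B ∈ 𝓑, B.Nonempty)
    (h𝓑conn : ∀ B ∈ 𝓑, IsConnected B)
    (h𝓑base : ∀ U : Set X, IsOpen U → U.Nonempty → ∃ B ∈ 𝓑, B ⊆ U)
    (f : X → ℝ) (hf : Continuous f)
    (B : Set X) (hB : B ∈ 𝓑) (hBf : (f '' B).Nontrivial) :
    f '' B = f '' (B \ ⋃₀ {B' ∈ 𝓑 | ¬ (f '' B').Nontrivial}) := by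
  refine Subset.antisymm ?_ (image_mono (f := f) diff_subset)
  rintro t ⟨x, hxB, rfl⟩
  by_contra ht
  have key : ∀ y ∈ B, f y = f x → y ∈ ⋃₀ {B' ∈ 𝓑 | ¬ (f '' B').Nontrivial} := by
    intro y hy hfy
    by_contra h
    exact ht ⟨y, ⟨hy, h⟩, hfy⟩
  set U : Set X := ⋃₀ {B' ∈ 𝓑 | f '' B' ⊆ {f x}} with hU
  have hUopen : IsOpen U := isOpen_sUnion fun B' hB' => h𝓑open B' hB'.1
  have hVopen : IsOpen (f ⁻¹' {f x}ᶜ) := isOpen_compl_singleton.preimage hf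
  have hcover : B ⊆ U ∪ f ⁻¹' {f x}ᶜ := by
    intro y hy
    by_cases h : f y = f x
    · obtain ⟨B', ⟨hB'𝓑, hB'const⟩, hyB'⟩ := key y hy h
      rw [Set.not_nontrivial_iff] at hB'const
      refine Or.inl ⟨B', ⟨hB'𝓑, ?_⟩, hyB'⟩
      rintro z ⟨w, hw, rfl⟩
      have : f w = f y := hB'const ⟨w, hw, rfl⟩ ⟨y, hyB', rfl⟩
      simp [this, h]
    · exact Or.inr h
  have hUne : (B ∩ U).Nonempty := by
    obtain ⟨B', ⟨hB'𝓑, hB'const⟩, hxB'⟩ := key x hxB rfl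
    rw [Set.not_nontrivial_iff] at hB'const
    refine ⟨x, hxB, B', ⟨hB'𝓑, ?_⟩, hxB'⟩
    rintro z ⟨w, hw, rfl⟩
    exact hB'const ⟨w, hw, rfl⟩ ⟨x, hxB', rfl⟩
  have hVne : (B ∩ f ⁻¹' {f x}ᶜ).Nonempty := by
    obtain ⟨a, ⟨ya, hya, rfl⟩, b, ⟨yb, hyb, rfl⟩, hab⟩ := hBf
    by_cases h : f ya = f x
    · exact ⟨yb, hyb, by simp [← h]; exact fun e => hab (e.symm ▸ rfl)⟩
    · exact ⟨ya, hya, h⟩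
  obtain ⟨y, _, ⟨B', ⟨_, hB'sub⟩, hyB'⟩, hyV⟩ :=
    (h𝓑conn B hB).isPreconnected U (f ⁻¹' {f x}ᶜ) hUopen hVopen hcover hUne hVne
  exact hyV (hB'sub ⟨y, hyB', rfl⟩)
end

section
/- Every crowded, locally connected, functionally Hausdorff topological space X is 𝔠-resolvable, where 𝔠 = 2^ℵ₀; i.e., X admits a family of 𝔠 pairwise disjoint dense subsets. -/
open Set

open Cardinal in

lemma exists_coset_family : ∃ S : ℝ → Set ℝ,
    (∀ (r a b : ℝ), a < b → (S r ∩ Set.Ioo a b).Nonempty) ∧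
    Pairwise (Function.onFun Disjoint S) := by
  classical
  set A : AddSubgroup ℝ := (Rat.castHom ℝ).toAddMonoidHom.range with hA
  have hmemA : ∀ x : ℝ, x ∈ A ↔ ∃ q : ℚ, (q : ℝ) = x := by
    intro x; simp [hA, AddMonoidHom.mem_range]
  have hAcount : Countable A := by
    have : (Set.range ((↑) : ℚ → ℝ)).Countable := Set.countable_range _
    have he : (A : Set ℝ) = Set.range ((↑) : ℚ → ℝ) := by
      ext x; simp [hmemA, Set.mem_range]
    rw [← Set.countable_coe_iff, ← he] at this
    exact this
  have hcard : (𝔠 : Cardinal) ≤ #(ℝ ⧸ A) := by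
    have h1 : #ℝ = #(ℝ ⧸ A) * #A := by
      rw [Cardinal.mk_congr (AddSubgroup.addGroupEquivQuotientProdAddSubgroup (s := A))]
      simp [Cardinal.mk_prod]
    have hAle : #A ≤ ℵ₀ := Cardinal.mk_le_aleph0
    rcases le_or_gt ℵ₀ #(ℝ ⧸ A) with h | h
    · calc (𝔠 : Cardinal) = #ℝ := Cardinal.mk_real.symm
        _ = #(ℝ ⧸ A) * #A := h1
        _ ≤ #(ℝ ⧸ A) * ℵ₀ := by exact mul_le_mul_right hAle _
        _ = #(ℝ ⧸ A) := Cardinal.mul_aleph0_eq h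
    · exfalso
      have : #ℝ ≤ ℵ₀ * ℵ₀ := by
        rw [h1]; exact mul_le_mul' h.le hAle
      rw [Cardinal.aleph0_mul_aleph0, Cardinal.mk_real] at this
      exact absurd this (not_le.mpr Cardinal.aleph0_lt_continuum)
  have hinj : ∃ j : ℝ → ℝ ⧸ A, Function.Injective j := by
    rw [← Cardinal.mk_real] at hcard
    obtain ⟨j⟩ := Cardinal.le_def _ _ |>.mp hcard
    exact ⟨j, j.injective⟩
  obtain ⟨j, hj⟩ := hinj
  set e : ℝ → ℝ := fun r => (j r).out with he
  have hje : ∀ r, QuotientAddGroup.mk (e r) = j r := fun r => Quotient.out_eq _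
  refine ⟨fun r => {x | ∃ q : ℚ, x = e r + q}, ?_, ?_⟩
  · intro r a b hab
    obtain ⟨q, hq1, hq2⟩ := exists_rat_btwn (show a - e r < b - e r by linarith)
    exact ⟨e r + q, ⟨q, rfl⟩, by constructor <;> linarith⟩
  · intro r s hrs
    simp only [Function.onFun, Set.disjoint_left]
    rintro x ⟨q1, rfl⟩ ⟨q2, hx2⟩
    apply hrs
    apply hj
    rw [← hje r, ← hje s]
    rw [QuotientAddGroup.eq]
    apply hmemA _ |>.mpr
    exact ⟨q1 - q2, by push_cast; linarith⟩


lemma exists_good_subset {X : Type*} [TopologicalSpace X] [LocallyConnectedSpace X]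
    (hcrowded : ∀ x : X, ¬ IsOpen ({x} : Set X))
    (hfunHaus : ∀ x y : X, x ≠ y → ∃ f : X → ℝ, Continuous f ∧ f x ≠ f y)
    {U : Set X} (hU : IsOpen U) (hUne : U.Nonempty) :
    ∃ Y : Set X, Y ⊆ U ∧ Y.Nonempty ∧ ∃ f : X → ℝ, Continuous f ∧
      ∀ O : Set X, IsOpen O → (O ∩ Y).Nonempty →
        ∃ a b : ℝ, a < b ∧ Ioo a b ⊆ f '' (O ∩ Y) := by
  classical
  -- every open nonempty set has two distinct points
  have two : ∀ O : Set X, IsOpen O → O.Nonempty → ∃ p ∈ O, ∃ q ∈ O, p ≠ q := by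
    rintro O hO ⟨x, hx⟩
    by_contra h
    push_neg at h
    have hOx : O = {x} := by
      ext y; constructor
      · intro hy
        exact h y hy x hx
      · rintro rfl; exact hx
    exact hcrowded x (hOx ▸ hO)
  obtain ⟨x, hxU⟩ := hUne
  set W := connectedComponentIn U x with hWdef
  have hWopen : IsOpen W := hU.connectedComponentIn
  have hWsub : W ⊆ U := connectedComponentIn_subset _ _
  have hxW : x ∈ W := mem_connectedComponentIn hxU
  have hWconn : IsPreconnected W :=
    (isConnected_connectedComponentIn_iff.mpr hxU).isPreconnected
  obtain ⟨p₀, hp₀, q₀, hq₀, hpq₀⟩ := two W hWopen ⟨x, hxW⟩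
  obtain ⟨f, hf, hfpq⟩ := hfunHaus p₀ q₀ hpq₀
  set M : Set X := {z | z ∈ W ∧ ∀ N : Set X, IsOpen N → z ∈ N →
      ∃ w, w ∈ N ∧ w ∈ W ∧ f w ≠ f z} with hMdef
  have hMW : M ⊆ W := fun z hz => hz.1
  -- key sublemma
  have key : ∀ V : Set X, V ⊆ W → IsPreconnected V → ∀ p ∈ V, ∀ q ∈ V,
      ∀ c : ℝ, f p < c → c < f q → ∃ z ∈ V, z ∈ M ∧ f z = c := by
    intro V hVW hVconn p hp q hq c hc1 hc2
    by_contra hcon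
    push_neg at hcon
    have hP : ∀ z ∈ V, f z = c → ∃ N, IsOpen N ∧ z ∈ N ∧ ∀ w ∈ N, w ∈ V → f w = c := by
      intro z hz hfz
      by_contra hno
      push_neg at hno
      refine hcon z hz ⟨hVW hz, fun N hN hzN => ?_⟩ hfz
      obtain ⟨w, hwN, hwV, hwc⟩ := hno N hN hzN
      exact ⟨w, hwN, hVW hwV, by rw [hfz]; exact hwc⟩
    choose N hNopen hNmem hNval using
      fun (z : {z // z ∈ V ∧ f z = c}) => hP z z.2.1 z.2.2
    set A := ⋃ z, N z with hAdef
    have hAopen : IsOpen A := isOpen_iUnion hNopen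
    have hBopen : IsOpen (f ⁻¹' {c}ᶜ) := (isClosed_singleton.preimage hf).isOpen_compl
    have hsub : V ⊆ A ∪ f ⁻¹' {c}ᶜ := by
      intro z hz
      by_cases hc : f z = c
      · exact Or.inl (mem_iUnion.mpr ⟨⟨z, hz, hc⟩, hNmem _⟩)
      · exact Or.inr hc
    have hcV : c ∈ f '' V :=
      hVconn.intermediate_value hp hq hf.continuousOn ⟨le_of_lt hc1, le_of_lt hc2⟩
    obtain ⟨z₁, hz₁V, hz₁c⟩ := hcV
    have h1 : (V ∩ A).Nonempty :=
      ⟨z₁, hz₁V, mem_iUnion.mpr ⟨⟨z₁, hz₁V, hz₁c⟩, hNmem _⟩⟩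
    have h2 : (V ∩ f ⁻¹' {c}ᶜ).Nonempty := ⟨p, hp, ne_of_lt hc1⟩
    obtain ⟨w, hwV, hwA, hwB⟩ := hVconn A _ hAopen hBopen hsub h1 h2
    obtain ⟨z, hz⟩ := mem_iUnion.mp hwA
    exact hwB (hNval z w hz hwV)
  -- M is nonempty
  have hMne : M.Nonempty := by
    rcases Ne.lt_or_gt hfpq with h | h
    · obtain ⟨z, _, hzM, _⟩ := key W Subset.rfl hWconn p₀ hp₀ q₀ hq₀
        ((f p₀ + f q₀) / 2) (by linarith) (by linarith)
      exact ⟨z, hzM⟩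
    · obtain ⟨z, _, hzM, _⟩ := key W Subset.rfl hWconn q₀ hq₀ p₀ hp₀
        ((f p₀ + f q₀) / 2) (by linarith) (by linarith)
      exact ⟨z, hzM⟩
  refine ⟨M, fun z hz => hWsub (hMW hz), hMne, f, hf, ?_⟩
  intro O hO hOne
  obtain ⟨z₀, hz₀O, hz₀M⟩ := hOne
  set V := connectedComponentIn (O ∩ W) z₀ with hVdef
  have hz₀OW : z₀ ∈ O ∩ W := ⟨hz₀O, hMW hz₀M⟩
  have hVopen : IsOpen V := (hO.inter hWopen).connectedComponentIn
  have hVsub : V ⊆ O ∩ W := connectedComponentIn_subset _ _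
  have hz₀V : z₀ ∈ V := mem_connectedComponentIn hz₀OW
  have hVconn : IsPreconnected V :=
    (isConnected_connectedComponentIn_iff.mpr hz₀OW).isPreconnected
  obtain ⟨w, hwV, hwW, hwf⟩ := hz₀M.2 V hVopen hz₀V
  have hVW : V ⊆ W := fun y hy => (hVsub hy).2
  refine ⟨min (f w) (f z₀), max (f w) (f z₀), by
    rcases Ne.lt_or_gt hwf with h | h
    · rw [min_eq_left h.le, max_eq_right h.le]; exact h
    · rw [min_eq_right h.le, max_eq_left h.le]; exact h, ?_⟩
  intro c hc
  have hz₀V' : z₀ ∈ V := hz₀V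
  rcases Ne.lt_or_gt hwf with h | h
  · rw [min_eq_left h.le, max_eq_right h.le] at hc
    obtain ⟨z, hzV, hzM, hzc⟩ := key V hVW hVconn w hwV z₀ hz₀V c hc.1 hc.2
    exact ⟨z, ⟨(hVsub hzV).1, hzM⟩, hzc⟩
  · rw [min_eq_right h.le, max_eq_left h.le] at hc
    obtain ⟨z, hzV, hzM, hzc⟩ := key V hVW hVconn z₀ hz₀V w hwV c hc.1 hc.2
    exact ⟨z, ⟨(hVsub hzV).1, hzM⟩, hzc⟩

/-- Every crowded, locally connected, functionally Hausdorff space is `𝔠`-resolvable,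
i.e. admits a family, indexed by `ℝ` (a set of cardinality `𝔠 = 2^ℵ₀`),
of pairwise disjoint dense subsets. -/
theorem crowded_locallyConnected_functionallyHausdorff_continuum_resolvable
    {X : Type*} [TopologicalSpace X] [LocallyConnectedSpace X]
    (hcrowded : ∀ x : X, ¬ IsOpen ({x} : Set X))
    (hfunHaus : ∀ x y : X, x ≠ y → ∃ f : X → ℝ, Continuous f ∧ f x ≠ f y) :
    ∃ D : ℝ → Set X, (∀ r : ℝ, Dense (D r)) ∧ Pairwise (Function.onFun Disjoint D) := by
  classical
  obtain ⟨S, hSdense, hSdisj⟩ := exists_coset_family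
  set Good : Set X → Prop := fun Y => Y.Nonempty ∧ ∃ f : X → ℝ, Continuous f ∧
      ∀ O : Set X, IsOpen O → (O ∩ Y).Nonempty →
        ∃ a b : ℝ, a < b ∧ Ioo a b ⊆ f '' (O ∩ Y) with hGooddef
  have hGoodU : ∀ U : Set X, IsOpen U → U.Nonempty → ∃ Y, Y ⊆ U ∧ Good Y := by
    intro U hU hUne
    obtain ⟨Y, hYU, hYne, f, hfc, hfp⟩ := exists_good_subset hcrowded hfunHaus hU hUne
    exact ⟨Y, hYU, hYne, f, hfc, hfp⟩
  set 𝒮 : Set (Set (Set X)) := {C | (∀ Y ∈ C, Good Y) ∧ C.Pairwise Disjoint} with h𝒮def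
  obtain ⟨C, hCmax⟩ := zorn_subset 𝒮 (by
    intro c hc𝒮 hchain
    refine ⟨⋃₀ c, ⟨?_, ?_⟩, fun s hs => subset_sUnion_of_mem hs⟩
    · rintro Y ⟨t, htc, hYt⟩
      exact (hc𝒮 htc).1 Y hYt
    · rintro Y ⟨t1, ht1, hYt1⟩ Z ⟨t2, ht2, hZt2⟩ hYZ
      rcases hchain.total ht1 ht2 with h | h
      · exact (hc𝒮 ht2).2 (h hYt1) hZt2 hYZ
      · exact (hc𝒮 ht1).2 hYt1 (h hZt2) hYZ)
  have hC𝒮 : C ∈ 𝒮 := hCmax.1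
  have hdense : Dense (⋃₀ C) := by
    rw [dense_iff_inter_open]
    intro U hU hUne
    by_contra hempty
    rw [Set.not_nonempty_iff_eq_empty] at hempty
    obtain ⟨Y, hYU, hYgood⟩ := hGoodU U hU hUne
    have hYnotin : Y ∉ C := by
      intro hYC
      obtain ⟨y, hy⟩ := hYgood.1
      have : y ∈ U ∩ ⋃₀ C := ⟨hYU hy, Y, hYC, hy⟩
      rw [hempty] at this
      exact this
    have hC' : insert Y C ∈ 𝒮 := by
      constructor
      · rintro Z (rfl | hZ)
        · exact hYgood
        · exact hC𝒮.1 Z hZ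
      · intro Z1 hZ1 Z2 hZ2 hne
        have hdisjYC : ∀ Z ∈ C, Disjoint Y Z := by
          intro Z hZ
          rw [Set.disjoint_left]
          intro a haY haZ
          have : a ∈ U ∩ ⋃₀ C := ⟨hYU haY, Z, hZ, haZ⟩
          rw [hempty] at this
          exact this
        rcases hZ1 with rfl | hZ1 <;> rcases hZ2 with rfl | hZ2
        · exact absurd rfl hne
        · exact hdisjYC _ hZ2
        · exact (hdisjYC _ hZ1).symm
        · exact hC𝒮.2 hZ1 hZ2 hne
    have : insert Y C ⊆ C := hCmax.2 hC' (subset_insert _ _)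
    exact hYnotin (this (mem_insert _ _))
  choose! fY hfYcont hfYprop using fun Y (h : Y ∈ C) => (hC𝒮.1 Y h).2
  refine ⟨fun r => ⋃ Y ∈ C, Y ∩ fY Y ⁻¹' (S r), ?_, ?_⟩
  · intro r
    rw [dense_iff_inter_open]
    intro U hUopen hUne
    obtain ⟨z, hzU, Y, hYC, hzY⟩ := dense_iff_inter_open.mp hdense U hUopen hUne
    obtain ⟨a, b, hab, hIoo⟩ := hfYprop Y hYC U hUopen ⟨z, hzU, hzY⟩
    obtain ⟨s, hsS, hsIoo⟩ := hSdense r a b hab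
    obtain ⟨w, hwOY, hws⟩ := hIoo hsIoo
    exact ⟨w, hwOY.1, mem_iUnion₂.mpr ⟨Y, hYC, hwOY.2, by
      rw [mem_preimage, hws]; exact hsS⟩⟩
  · intro r s hrs
    rw [Function.onFun, Set.disjoint_left]
    rintro x hx hx'
    simp only [mem_iUnion] at hx hx'
    obtain ⟨Y, hY, hxY, hxf⟩ := hx
    obtain ⟨Z, hZ, hxZ, hxf'⟩ := hx'
    by_cases hYZ : Y = Z
    · subst hYZ
      exact Set.disjoint_left.mp (hSdisj hrs) hxf hxf'
    · exact Set.disjoint_left.mp (hC𝒮.2 hY hZ hYZ) hxY hxZ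
end

section
/- Every crowded, functionally Hausdorff topological space X that has a π-base consisting of connected sets is 𝔠-resolvable, where 𝔠 = 2^ℵ₀; i.e., X admits a family of 𝔠 pairwise disjoint dense subsets. -/
set_option maxHeartbeats 1000000

open Set

namespace CrowdedResAux

/-! ### The rationals as an additive subgroup of `ℝ`, and its quotient -/

noncomputable def ratSub : AddSubgroup ℝ where
  carrier := Set.range ((↑) : ℚ → ℝ)
  add_mem' := by rintro a b ⟨p, rfl⟩ ⟨q, rfl⟩; exact ⟨p + q, by push_cast; ring⟩
  zero_mem' := ⟨0, by norm_num⟩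
  neg_mem' := by rintro a ⟨p, rfl⟩; exact ⟨-p, by push_cast; ring⟩

noncomputable def qmk : ℝ →+ (ℝ ⧸ ratSub) := QuotientAddGroup.mk' ratSub

lemma qmk_surjective : Function.Surjective qmk := QuotientAddGroup.mk'_surjective ratSub

/-- Every coset of `ℚ` meets every open interval. -/
lemma qmk_dense (q : ℝ ⧸ ratSub) (s t : ℝ) (h : s < t) :
    ∃ τ : ℝ, s < τ ∧ τ < t ∧ qmk τ = q := by
  obtain ⟨v, rfl⟩ := qmk_surjective q
  obtain ⟨u, hu1, hu2⟩ := exists_rat_btwn (sub_lt_sub_right h v)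
  refine ⟨v + u, by linarith, by linarith, ?_⟩
  have h0 : qmk (u : ℝ) = 0 := by
    have : ((u : ℝ)) ∈ ratSub := ⟨u, rfl⟩
    simpa [qmk, QuotientAddGroup.mk'_apply] using (QuotientAddGroup.eq_zero_iff _).mpr this
  rw [map_add, h0, add_zero]

/-- There are continuum many cosets, so `ℝ` injects into `ℝ ⧸ ℚ`. -/
lemma exists_j : ∃ j : ℝ → ℝ ⧸ ratSub, Function.Injective j := by
  classical
  have hsurj : Function.Surjective
      (fun p : (ℝ ⧸ ratSub) × ℚ => (Quotient.out p.1) + ((p.2 : ℝ))) := by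
    intro x
    have hx : ((Quotient.out (qmk x) : ℝ) : ℝ ⧸ ratSub) = qmk x := QuotientAddGroup.out_eq' _
    have hmem : Quotient.out (qmk x) - x ∈ ratSub := by
      rw [← QuotientAddGroup.eq_iff_sub_mem]
      simpa [qmk, QuotientAddGroup.mk'_apply] using hx
    obtain ⟨u, hu⟩ := (neg_mem hmem : -(Quotient.out (qmk x) - x) ∈ ratSub)
    exact ⟨(qmk x, u), by simp only; rw [hu]; ring⟩
  have hle : (Cardinal.mk ℝ) ≤ Cardinal.mk ((ℝ ⧸ ratSub) × ℚ) :=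
    Cardinal.mk_le_of_surjective hsurj
  rw [Cardinal.mk_prod, Cardinal.lift_id, Cardinal.lift_id, Cardinal.mkRat] at hle
  have hQ : Cardinal.aleph0 ≤ Cardinal.mk (ℝ ⧸ ratSub) := by
    by_contra hcon
    push_neg at hcon
    have h1 : Cardinal.mk ℝ ≤ Cardinal.aleph0 * Cardinal.aleph0 :=
      hle.trans (mul_le_mul' hcon.le le_rfl)
    rw [Cardinal.aleph0_mul_aleph0] at h1
    have h2 : Cardinal.aleph0 < Cardinal.mk ℝ := by
      rw [Cardinal.mk_real]; exact Cardinal.aleph0_lt_continuum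
    exact absurd h1 (not_le.mpr h2)
  have hfin : Cardinal.mk ℝ ≤ Cardinal.mk (ℝ ⧸ ratSub) := by
    refine hle.trans ?_
    rw [Cardinal.mul_eq_left hQ hQ Cardinal.aleph0_ne_zero]
  obtain ⟨e⟩ := (Cardinal.le_def _ _).mp hfin
  exact ⟨e, e.injective⟩

/-! ### Topological machinery -/

universe u
variable {X : Type u} [TopologicalSpace X]

/-- Union of all open sets on which `g` is constantly `c`. -/
def constOpens (g : X → ℝ) (c : ℝ) : Set X :=
  ⋃₀ {O | IsOpen O ∧ ∀ z ∈ O, g z = c}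

/-- Union of all open sets on which `g` is constant. -/
def locConst (g : X → ℝ) : Set X :=
  ⋃₀ {O | IsOpen O ∧ ∃ c, ∀ z ∈ O, g z = c}

lemma isOpen_constOpens (g : X → ℝ) (c : ℝ) : IsOpen (constOpens g c) :=
  isOpen_sUnion fun _ hO => hO.1

lemma constOpens_subset_locConst (g : X → ℝ) (c : ℝ) : constOpens g c ⊆ locConst g := by
  rintro x ⟨O, ⟨hO, hc⟩, hx⟩; exact ⟨O, ⟨hO, c, hc⟩, hx⟩

lemma eq_of_mem_constOpens {g : X → ℝ} {c : ℝ} {x : X} (h : x ∈ constOpens g c) : g x = c := by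
  obtain ⟨O, ⟨_, hc⟩, hx⟩ := h; exact hc x hx

lemma subset_constOpens {g : X → ℝ} {c : ℝ} {B : Set X} (hB : IsOpen B)
    (h : ∀ z ∈ B, g z = c) : B ⊆ constOpens g c := fun x hx => ⟨B, ⟨hB, h⟩, hx⟩

/-- If a preconnected set lies inside `locConst g` then `g` is constant on it. -/
lemma const_on_preconn_of_locConst {g : X → ℝ} {S : Set X} (hS : IsPreconnected S)
    (hsub : ∀ z ∈ S, z ∈ locConst g) : ∀ x ∈ S, ∀ y ∈ S, g x = g y := by
  intro x hx y hy
  by_contra hne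
  have hvopen : IsOpen (⋃₀ {O | IsOpen O ∧ ∃ c, c ≠ g x ∧ ∀ z ∈ O, g z = c}) :=
    isOpen_sUnion fun _ hO => hO.1
  have hcover : S ⊆ constOpens g (g x) ∪ ⋃₀ {O | IsOpen O ∧ ∃ c, c ≠ g x ∧ ∀ z ∈ O, g z = c} := by
    intro z hz
    obtain ⟨O, ⟨hO, c, hc⟩, hzO⟩ := hsub z hz
    by_cases h : c = g x
    · exact Or.inl ⟨O, ⟨hO, h ▸ hc⟩, hzO⟩
    · exact Or.inr ⟨O, ⟨hO, c, h, hc⟩, hzO⟩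
  have h1 : (S ∩ constOpens g (g x)).Nonempty := by
    obtain ⟨O, ⟨hO, c, hc⟩, hxO⟩ := hsub x hx
    exact ⟨x, hx, O, ⟨hO, fun z hz => (hc z hz).trans (hc x hxO).symm⟩, hxO⟩
  have h2 : (S ∩ ⋃₀ {O | IsOpen O ∧ ∃ c, c ≠ g x ∧ ∀ z ∈ O, g z = c}).Nonempty := by
    obtain ⟨O, ⟨hO, c, hc⟩, hyO⟩ := hsub y hy
    have hcy : c = g y := (hc y hyO).symm
    exact ⟨y, hy, O, ⟨hO, c, fun hcc => hne ((hcy ▸ hcc : g y = g x)).symm, hc⟩, hyO⟩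
  obtain ⟨z, hzS, hzu, hzv⟩ := hS _ _ (isOpen_constOpens g (g x)) hvopen hcover h1 h2
  obtain ⟨O, ⟨_, c, hcne, hc⟩, hzO⟩ := hzv
  exact hcne ((hc z hzO).symm.trans (eq_of_mem_constOpens hzu))

/-- Key fiber lemma: on a preconnected set attaining values on both sides of `τ`, the fiber
at `τ` must contain a point at which `g` is not locally constant. -/
lemma exists_fiber_escape {g : X → ℝ} (hg : Continuous g) {D : Set X}
    (hD : IsPreconnected D) {a b : X} (ha : a ∈ D) (hb : b ∈ D) {τ : ℝ}
    (h1 : g a < τ) (h2 : τ < g b) : ∃ x ∈ D, g x = τ ∧ x ∉ locConst g := by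
  by_contra hcon
  push_neg at hcon
  have hcover : D ⊆ (g ⁻¹' Iio τ ∪ constOpens g τ) ∪ g ⁻¹' Ioi τ := by
    intro z hz
    rcases lt_trichotomy (g z) τ with h | h | h
    · exact Or.inl (Or.inl h)
    · obtain ⟨O, ⟨hO, c, hc⟩, hzO⟩ := hcon z hz h
      exact Or.inl (Or.inr ⟨O, ⟨hO, fun w hw => (hc w hw).trans ((hc z hzO).symm.trans h)⟩, hzO⟩)
    · exact Or.inr h
  obtain ⟨z, _, hzu, hzv⟩ := hD _ _ ((hg.isOpen_preimage _ isOpen_Iio).union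
      (isOpen_constOpens g τ)) (hg.isOpen_preimage _ isOpen_Ioi) hcover
      ⟨a, ha, Or.inl h1⟩ ⟨b, hb, h2⟩
  have hzgt : τ < g z := hzv
  rcases hzu with h | h
  · exact absurd hzgt (not_lt.mpr (le_of_lt h))
  · exact absurd hzgt (not_lt.mpr (le_of_eq (eq_of_mem_constOpens h)))

/-! ### Maximal connected open pieces -/

/-- The union of all open preconnected subsets of `R` containing `x`. -/
def maxConn (x : X) (R : Set X) : Set X :=
  ⋃₀ {S | x ∈ S ∧ IsOpen S ∧ IsPreconnected S ∧ S ⊆ R}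

lemma isOpen_maxConn (x : X) (R : Set X) : IsOpen (maxConn x R) :=
  isOpen_sUnion fun _ hS => hS.2.1

lemma maxConn_subset (x : X) (R : Set X) : maxConn x R ⊆ R := fun y hy => by
  obtain ⟨S, hS, h⟩ := hy; exact hS.2.2.2 h

lemma isPreconnected_maxConn (x : X) (R : Set X) : IsPreconnected (maxConn x R) :=
  isPreconnected_sUnion x _ (fun _ hS => hS.1) (fun _ hS => hS.2.2.1)

lemma subset_maxConn {x : X} {R S : Set X} (hx : x ∈ S) (ho : IsOpen S)
    (hc : IsPreconnected S) (hsub : S ⊆ R) : S ⊆ maxConn x R :=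
  subset_sUnion_of_mem ⟨hx, ho, hc, hsub⟩

lemma maxConn_eq {B R : Set X} (hBo : IsOpen B) (hBc : IsPreconnected B) (hBR : B ⊆ R)
    {y z : X} (hy : y ∈ B) (hz : z ∈ B) : maxConn y R = maxConn z R := by
  have key : ∀ y' ∈ B, ∀ z' ∈ B, maxConn y' R ⊆ maxConn z' R := by
    intro y' hy' z' hz'
    refine sUnion_subset ?_
    rintro S ⟨hxS, hSo, hSc, hSR⟩
    have hsub : S ∪ B ⊆ maxConn z' R :=
      subset_maxConn (Or.inr hz') (hSo.union hBo)
        (hSc.union y' hxS hy' hBc) (union_subset hSR hBR)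
    exact subset_union_left.trans hsub
  exact le_antisymm (key y hy z hz) (key z hz y hy)

/-! ### The transfinite chain of cells -/

variable (gg : Set X → X → ℝ)

/-- The constancy class at `x` of the function associated to cell `Γ`. -/
def stepSet (x : X) (Γ : Set X) : Set X := Γ ∩ constOpens (gg Γ) (gg Γ x)

/-- The canonical transfinite chain of "cells" around `x`. -/
noncomputable def gam (x : X) : Ordinal.{u} → Set X :=
  WellFounded.fix Ordinal.lt_wf
    (fun α ih => maxConn x (⋂ β : {β : Ordinal.{u} // β < α}, stepSet gg x (ih β.1 β.2)))

lemma gam_eq (x : X) (α : Ordinal.{u}) :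
    gam gg x α
      = maxConn x (⋂ β : {β : Ordinal.{u} // β < α}, stepSet gg x (gam gg x β.1)) := by
  exact WellFounded.fix_eq _ _ _

lemma gam_subset_step {x : X} {α β : Ordinal.{u}} (h : β < α) :
    gam gg x α ⊆ stepSet gg x (gam gg x β) := by
  rw [gam_eq]
  refine subset_trans (maxConn_subset _ _) ?_
  exact iInter_subset (fun β : {β : Ordinal.{u} // β < α} => stepSet gg x (gam gg x β.1)) ⟨β, h⟩

/-- `x` stops (gets colored) at stage `α`. -/
def stops (x : X) (α : Ordinal.{u}) : Prop :=
  x ∈ gam gg x α ∧ x ∉ locConst (gg (gam gg x α))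

lemma stops_unique {x : X} {α α' : Ordinal.{u}} (h : stops gg x α) (h' : stops gg x α') :
    α = α' := by
  rcases lt_trichotomy α α' with hlt | heq | hlt
  · have hx := gam_subset_step gg hlt h'.1
    exact absurd (constOpens_subset_locConst _ _ hx.2) h.2
  · exact heq
  · have hx := gam_subset_step gg hlt h.1
    exact absurd (constOpens_subset_locConst _ _ hx.2) h'.2

/-- Main lemma: every nonempty open connected set `B` admits a stage at which the chains of
all its points agree on a common cell on whose function `B` is nonconstant. -/
lemma exists_break
    (hgg : ∀ Γ : Set X, IsOpen Γ → Γ.Nonempty →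
      Continuous (gg Γ) ∧ ∃ a ∈ Γ, ∃ b ∈ Γ, gg Γ a ≠ gg Γ b)
    {B : Set X} (hBo : IsOpen B) (hBc : IsPreconnected B) (hBne : B.Nonempty) :
    ∃ (Γ : Set X) (β : Ordinal.{u}), IsOpen Γ ∧ (∀ y ∈ B, gam gg y β = Γ) ∧ B ⊆ Γ ∧
      ∃ a ∈ B, ∃ b ∈ B, gg Γ a ≠ gg Γ b := by
  obtain ⟨y₀, hy₀⟩ := hBne
  by_contra hG
  push_neg at hG
  -- uniformity of the chains over B
  have uniform : ∀ α : Ordinal.{u},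
      (∀ y ∈ B, gam gg y α = gam gg y₀ α) ∧ B ⊆ gam gg y₀ α := by
    intro α
    induction α using Ordinal.induction with
    | h α ih =>
      have hconst : ∀ β : {β : Ordinal.{u} // β < α}, ∀ a ∈ B, ∀ b ∈ B,
          gg (gam gg y₀ β.1) a = gg (gam gg y₀ β.1) b := by
        intro β
        exact hG (gam gg y₀ β.1) β.1 (by rw [gam_eq]; exact isOpen_maxConn _ _)
          (fun y hy => (ih β.1 β.2).1 y hy) (ih β.1 β.2).2
      have hstep : ∀ y ∈ B, ∀ β : {β : Ordinal.{u} // β < α},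
          stepSet gg y (gam gg y β.1) = stepSet gg y₀ (gam gg y₀ β.1) := by
        intro y hy β
        rw [stepSet, stepSet, (ih β.1 β.2).1 y hy, hconst β y hy y₀ hy₀]
      have hreg : ∀ y ∈ B,
          (⋂ β : {β : Ordinal.{u} // β < α}, stepSet gg y (gam gg y β.1))
            = ⋂ β : {β : Ordinal.{u} // β < α}, stepSet gg y₀ (gam gg y₀ β.1) := by
        intro y hy
        exact iInter_congr fun β => hstep y hy β
      have hBR : B ⊆ ⋂ β : {β : Ordinal.{u} // β < α}, stepSet gg y₀ (gam gg y₀ β.1) := by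
        intro z hz
        refine mem_iInter.mpr fun β => ⟨(ih β.1 β.2).2 hz, ?_⟩
        exact subset_constOpens hBo (fun w hw => hconst β w hw y₀ hy₀) hz
      constructor
      · intro y hy
        rw [gam_eq gg y α, gam_eq gg y₀ α, hreg y hy]
        exact maxConn_eq hBo hBc hBR hy hy₀
      · rw [gam_eq gg y₀ α]
        exact subset_maxConn hy₀ hBo hBc hBR
  -- each cell contains a point escaping local constancy
  have hpt : ∀ α : Ordinal.{u},
      ∃ p, p ∈ gam gg y₀ α ∧ p ∉ locConst (gg (gam gg y₀ α)) := by
    intro α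
    have hopen : IsOpen (gam gg y₀ α) := by rw [gam_eq]; exact isOpen_maxConn _ _
    have hne : (gam gg y₀ α).Nonempty := ⟨y₀, (uniform α).2 hy₀⟩
    obtain ⟨-, a, ha, b, hb, hab⟩ := hgg _ hopen hne
    by_contra hcon
    push_neg at hcon
    have hpc : IsPreconnected (gam gg y₀ α) := by rw [gam_eq]; exact isPreconnected_maxConn _ _
    exact hab (const_on_preconn_of_locConst hpc hcon a ha b hb)
  choose p hp1 hp2 using hpt
  -- strictly decreasing chain gives an injection Ordinal ↪ X : absurd
  have hinj : Function.Injective p := by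
    intro α β hEq
    by_contra hne
    rcases Ne.lt_or_gt hne with h | h
    · have hmem := gam_subset_step gg h (hp1 β)
      exact hp2 α (hEq ▸ constOpens_subset_locConst _ _ hmem.2)
    · have hmem := gam_subset_step gg h (hp1 α)
      exact hp2 β (hEq.symm ▸ constOpens_subset_locConst _ _ hmem.2)
  exact not_small_ordinal.{u} (small_of_injective hinj)

open Classical in
/-- Choice of a separating continuous function for each subset. -/
noncomputable def ggOf (X : Type u) [TopologicalSpace X] : Set X → X → ℝ := fun Γ =>
  if h : ∃ f : X → ℝ, Continuous f ∧ ∃ a ∈ Γ, ∃ b ∈ Γ, f a ≠ f b then h.choose else fun _ => 0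

lemma ggOf_spec {X : Type u} [TopologicalSpace X] {Γ : Set X}
    (h : ∃ f : X → ℝ, Continuous f ∧ ∃ a ∈ Γ, ∃ b ∈ Γ, f a ≠ f b) :
    Continuous (ggOf X Γ) ∧ ∃ a ∈ Γ, ∃ b ∈ Γ, ggOf X Γ a ≠ ggOf X Γ b := by
  unfold ggOf
  rw [dif_pos h]
  exact ⟨h.choose_spec.1, h.choose_spec.2⟩

end CrowdedResAux

open CrowdedResAux in
/-- Every crowded, functionally Hausdorff space with a π-base consisting of connected
sets is `𝔠`-resolvable, i.e. admits a family, indexed by `ℝ` (a set of cardinality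
`𝔠 = 2^ℵ₀`), of pairwise disjoint dense subsets. -/
theorem crowded_piConnected_functionallyHausdorff_continuum_resolvable
    {X : Type*} [TopologicalSpace X]
    (hcrowded : ∀ x : X, ¬ IsOpen ({x} : Set X))
    (hfunHaus : ∀ x y : X, x ≠ y → ∃ f : X → ℝ, Continuous f ∧ f x ≠ f y)
    (hpi : ∃ 𝓑 : Set (Set X), (∀ B ∈ 𝓑, IsOpen B ∧ B.Nonempty ∧ IsConnected B) ∧
      ∀ U : Set X, IsOpen U → U.Nonempty → ∃ B ∈ 𝓑, B ⊆ U) :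
    ∃ D : ℝ → Set X, (∀ r : ℝ, Dense (D r)) ∧ Pairwise (Function.onFun Disjoint D) := by
  classical
  obtain ⟨𝓑, h𝓑, hbase⟩ := hpi
  obtain ⟨j, hj⟩ := exists_j
  have hEx : ∀ Γ : Set X, IsOpen Γ → Γ.Nonempty →
      ∃ f : X → ℝ, Continuous f ∧ ∃ a ∈ Γ, ∃ b ∈ Γ, f a ≠ f b := by
    rintro Γ hΓo ⟨x, hx⟩
    have hy : ∃ y ∈ Γ, y ≠ x := by
      by_contra h
      push_neg at h
      have hsing : Γ = {x} := Set.eq_singleton_iff_unique_mem.mpr ⟨hx, h⟩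
      exact hcrowded x (hsing ▸ hΓo)
    obtain ⟨y, hy, hyx⟩ := hy
    obtain ⟨f, hf, hfxy⟩ := hfunHaus y x hyx
    exact ⟨f, hf, y, hy, x, hx, hfxy⟩
  have hgg : ∀ Γ : Set X, IsOpen Γ → Γ.Nonempty →
      Continuous (ggOf X Γ) ∧ ∃ a ∈ Γ, ∃ b ∈ Γ, ggOf X Γ a ≠ ggOf X Γ b :=
    fun Γ h1 h2 => ggOf_spec (hEx Γ h1 h2)
  refine ⟨fun r => {x | ∃ α, stops (ggOf X) x α ∧
    qmk (ggOf X (gam (ggOf X) x α) x) = j r}, ?_, ?_⟩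
  · -- density
    intro r
    rw [dense_iff_inter_open]
    intro U hU hUne
    obtain ⟨B, hB𝓑, hBU⟩ := hbase U hU hUne
    obtain ⟨hBo, hBne, hBconn⟩ := h𝓑 B hB𝓑
    obtain ⟨Γ, β, hΓo, huni, hBΓ, a, ha, b, hb, hab⟩ :=
      exists_break (ggOf X) hgg hBo hBconn.isPreconnected hBne
    have hgΓ : Continuous (ggOf X Γ) := (hgg Γ hΓo ⟨a, hBΓ ha⟩).1
    rcases hab.lt_or_gt with hlt | hlt
    · obtain ⟨τ, h1, h2, h3⟩ := qmk_dense (j r) _ _ hlt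
      obtain ⟨x, hxB, hgx, hxV⟩ :=
        exists_fiber_escape hgΓ hBconn.isPreconnected ha hb h1 h2
      refine ⟨x, hBU hxB, β, ⟨?_, ?_⟩, ?_⟩
      · rw [huni x hxB]; exact hBΓ hxB
      · rw [huni x hxB]; exact hxV
      · rw [huni x hxB, hgx]; exact h3
    · obtain ⟨τ, h1, h2, h3⟩ := qmk_dense (j r) _ _ hlt
      obtain ⟨x, hxB, hgx, hxV⟩ :=
        exists_fiber_escape hgΓ hBconn.isPreconnected hb ha h1 h2
      refine ⟨x, hBU hxB, β, ⟨?_, ?_⟩, ?_⟩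
      · rw [huni x hxB]; exact hBΓ hxB
      · rw [huni x hxB]; exact hxV
      · rw [huni x hxB, hgx]; exact h3
  · -- pairwise disjointness
    intro r r' hne
    simp only [Function.onFun]
    rw [Set.disjoint_left]
    rintro x ⟨α, hs, hq⟩ ⟨α', hs', hq'⟩
    have hαα : α = α' := stops_unique (ggOf X) hs hs'
    subst hαα
    exact hne (hj (hq.symm.trans hq'))
end

section
/- Let X be a quasi-regular topological space that has a π-base consisting of connected sets and has no non-empty finite open subspace carrying the indiscrete subspace topology. Then X is ω-resolvable, i.e., X admits a countably infinite family of pairwise disjoint dense subsets. -/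
open Set

namespace OmegaRes

variable {X : Type*} [TopologicalSpace X]

/-- color selector: every value is attained at arbitrarily large inputs -/
def cf (m : ℕ) : ℕ := (Nat.unpair m).1

lemma cf_exists (n M : ℕ) : ∃ k, cf (M + k) = n := by
  refine ⟨Nat.pair n M - M, ?_⟩
  have h : M ≤ Nat.pair n M := Nat.right_le_pair n M
  rw [Nat.add_sub_cancel' h]
  simp [cf, Nat.unpair_pair]

/-- A node of the construction. -/
structure Nd (X : Type*) [TopologicalSpace X] where
  B : Set X
  leaf : Bool
  V : ℕ → Set X
  pieces : ℕ → Set X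
  idx : ℕ

namespace Nd

variable (t : Nd X)

def fr : Set X := closure t.B \ t.B

def del (i : ℕ) : Set X := closure (t.V i) \ t.V i

def G : ℕ → Set X
  | 0 => t.B \ closure (t.V 0)
  | (i+1) => t.V i \ closure (t.V (i+1))

def Q : Set X := interior (⋂ i, t.V i)

def regs : Set (Set X) := cond t.leaf ∅ (insert t.Q (Set.range t.G))

end Nd

def und (s t : Nd X) : Prop := ∃ R ∈ t.regs, closure s.B ⊆ R

/-- a good node -/
def Gd (t : Nd X) : Prop :=
  IsOpen t.B ∧ t.B.Nonempty ∧ IsPreconnected t.B ∧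
  (t.leaf = true → (∀ U : Set X, IsOpen U → U ∩ t.B = ∅ ∨ t.B ⊆ U) ∧
     (∀ n, (t.pieces n).Nonempty) ∧ (∀ n, t.pieces n ⊆ t.B) ∧
     (∀ n m, n ≠ m → t.pieces n ∩ t.pieces m = ∅)) ∧
  (t.leaf = false → (∀ i, IsOpen (t.V i)) ∧ (∀ i, (t.V i).Nonempty) ∧
     closure (t.V 0) ⊆ t.B ∧ (t.B \ t.V 0).Nonempty ∧
     (∀ i, closure (t.V (i+1)) ⊆ t.V i))

/-- the contribution of a node to the `n`-th dense set -/
def contrib (t : Nd X) (n : ℕ) : Set X :=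
  (if t.leaf then t.pieces n else t.del n) ∪ (if cf t.idx = n then t.fr else ∅)

def compat (s t : Nd X) : Prop := closure s.B ∩ closure t.B = ∅ ∨ und s t ∨ und t s

def comp2 (s t : Nd X) : Prop := s = t ∨ und s t ∨ und t s

/-- admissible families -/
def Adm (F : Set (Nd X)) : Prop :=
  (∀ t ∈ F, Gd t) ∧
  (∀ s ∈ F, ∀ t ∈ F, s ≠ t → compat s t) ∧
  (∀ S : Set (Nd X), S ⊆ F → S.Nonempty → (∀ a ∈ S, ∀ b ∈ S, comp2 a b) →
      ∃ m ∈ S, ∀ s ∈ S, s = m ∨ und s m) ∧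
  (∀ s ∈ F, ∀ t ∈ F, und s t → (∀ u ∈ F, ¬(und s u ∧ und u t)) → s.idx = t.idx + 1)

/-- end extension order -/
def ee (F G : Set (Nd X)) : Prop := F ⊆ G ∧ ∀ s ∈ G, s ∉ F → ∀ t ∈ F, ¬ und t s

def Dst (F : Set (Nd X)) (n : ℕ) : Set X := ⋃ t ∈ F, contrib t n

/- ### elementary topology helpers -/

lemma open_inter_closure_nonempty {W S : Set X} (hW : IsOpen W)
    (h : (W ∩ closure S).Nonempty) : (W ∩ S).Nonempty := by
  obtain ⟨x, hxW, hxS⟩ := h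
  exact mem_closure_iff.mp hxS W hW hxW

lemma open_subset_closure_nonempty {W S : Set X} (hW : IsOpen W) (hne : W.Nonempty)
    (h : W ⊆ closure S) : (W ∩ S).Nonempty := by
  obtain ⟨x, hx⟩ := hne
  exact open_inter_closure_nonempty hW ⟨x, hx, h hx⟩

lemma straddle {O S : Set X} (hO : IsPreconnected O) (hS : IsOpen S)
    (h1 : (O ∩ closure S).Nonempty) (h2 : (O \ closure S).Nonempty) :
    (O ∩ (closure S \ S)).Nonempty := by
  by_contra h
  rw [Set.not_nonempty_iff_eq_empty] at h
  have hsub : O ⊆ S ∪ (closure S)ᶜ := by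
    intro x hx
    by_cases hc : x ∈ closure S
    · left
      by_contra hxS
      exact Set.eq_empty_iff_forall_notMem.mp h x ⟨hx, hc, hxS⟩
    · exact Or.inr hc
  have h1' : (O ∩ S).Nonempty := by
    obtain ⟨x, hxO, hxc⟩ := h1
    rcases hsub hxO with hxS | hxn
    · exact ⟨x, hxO, hxS⟩
    · exact absurd hxc hxn
  have := hO S (closure S)ᶜ hS (isClosed_closure.isOpen_compl) hsub h1' h2
  obtain ⟨x, _, hxS, hxc⟩ := this
  exact hxc (subset_closure hxS)


/- ### node-level lemmas -/

section NodeLemmas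

variable {t : Nd X}

lemma leaf_props (hG : Gd t) (hl : t.leaf = true) :
    (∀ U : Set X, IsOpen U → U ∩ t.B = ∅ ∨ t.B ⊆ U) ∧
     (∀ n, (t.pieces n).Nonempty) ∧ (∀ n, t.pieces n ⊆ t.B) ∧
     (∀ n m, n ≠ m → t.pieces n ∩ t.pieces m = ∅) := hG.2.2.2.1 hl

lemma chain_props (hG : Gd t) (hl : t.leaf = false) :
    (∀ i, IsOpen (t.V i)) ∧ (∀ i, (t.V i).Nonempty) ∧
     closure (t.V 0) ⊆ t.B ∧ (t.B \ t.V 0).Nonempty ∧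
     (∀ i, closure (t.V (i+1)) ⊆ t.V i) := hG.2.2.2.2 hl

variable (hG : Gd t) (hl : t.leaf = false)
include hG hl

lemma V_succ_sub (i : ℕ) : t.V (i+1) ⊆ t.V i :=
  subset_closure.trans ((chain_props hG hl).2.2.2.2 i)

lemma V_mono {i j : ℕ} (h : i ≤ j) : t.V j ⊆ t.V i := by
  induction j with
  | zero => simpa [Nat.le_zero.mp h] using subset_rfl
  | succ k ih =>
    rcases Nat.lt_or_ge i (k+1) with h' | h'
    · exact (V_succ_sub hG hl k).trans (ih (Nat.lt_succ_iff.mp h'))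
    · have : i = k + 1 := le_antisymm h h'
      simp [this]

lemma V_sub_B (i : ℕ) : t.V i ⊆ t.B :=
  (V_mono hG hl (Nat.zero_le i)).trans
    (subset_closure.trans (chain_props hG hl).2.2.1)

lemma clV_sub_B (i : ℕ) : closure (t.V i) ⊆ t.B := by
  cases i with
  | zero => exact (chain_props hG hl).2.2.1
  | succ k => exact ((chain_props hG hl).2.2.2.2 k).trans (V_sub_B hG hl k)

lemma clV_mono {i j : ℕ} (h : i ≤ j) : closure (t.V j) ⊆ closure (t.V i) :=
  closure_mono (V_mono hG hl h)

lemma B_diff_V_ne (i : ℕ) : (t.B \ t.V i).Nonempty := by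
  obtain ⟨x, hx1, hx2⟩ := (chain_props hG hl).2.2.2.1
  exact ⟨x, hx1, fun hx => hx2 (V_mono hG hl (Nat.zero_le i) hx)⟩

lemma del_ne (i : ℕ) : (t.del i).Nonempty := by
  by_contra h
  rw [Set.not_nonempty_iff_eq_empty] at h
  have hcl : closure (t.V i) = t.V i := by
    apply Subset.antisymm _ subset_closure
    intro x hx
    by_contra hx2
    exact Set.eq_empty_iff_forall_notMem.mp h x ⟨hx, hx2⟩
  obtain ⟨y, hy1, hy2⟩ := B_diff_V_ne hG hl i
  obtain ⟨z, hz⟩ := (chain_props hG hl).2.1 i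
  have := hG.2.2.1 (t.V i) (t.V i)ᶜ ((chain_props hG hl).1 i)
    (by rw [← hcl]; exact isClosed_closure.isOpen_compl)
    (fun x _ => by by_cases hxv : x ∈ t.V i; exacts [Or.inl hxv, Or.inr hxv])
    ⟨z, V_sub_B hG hl i hz, hz⟩ ⟨y, hy1, hy2⟩
  obtain ⟨w, _, hw1, hw2⟩ := this
  exact hw2 hw1

lemma G_open (i : ℕ) : IsOpen (t.G i) := by
  cases i with
  | zero => exact hG.1.sdiff isClosed_closure
  | succ k => exact ((chain_props hG hl).1 k).sdiff isClosed_closure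

omit hG hl in
lemma Q_open : IsOpen t.Q := isOpen_interior

lemma G_sub_B (i : ℕ) : t.G i ⊆ t.B := by
  cases i with
  | zero => exact Set.diff_subset
  | succ k => exact Set.diff_subset.trans (V_sub_B hG hl k)

omit hG hl in
lemma Q_sub_V (i : ℕ) : t.Q ⊆ t.V i :=
  interior_subset.trans (Set.iInter_subset _ i)

omit hG hl in
lemma regs_mem (hl : t.leaf = false) ⦃R : Set X⦄ (hR : R ∈ t.regs) :
    R = t.Q ∨ ∃ i, R = t.G i := by
  rw [Nd.regs, hl, cond_false] at hR
  simpa only [Set.mem_insert_iff, Set.mem_range, eq_comm] using hR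

lemma regs_sub_B ⦃R : Set X⦄ (hR : R ∈ t.regs) : R ⊆ t.B := by
  have hR := regs_mem hl hR
  rcases hR with rfl | ⟨i, rfl⟩
  · exact (Q_sub_V (t := t) 0).trans (V_sub_B hG hl 0)
  · exact G_sub_B hG hl i

lemma regs_open ⦃R : Set X⦄ (hR : R ∈ t.regs) : IsOpen R := by
  have hR := regs_mem hl hR
  rcases hR with rfl | ⟨i, rfl⟩
  · exact Q_open
  · exact G_open hG hl i

omit hG hl in
lemma del_sub_clV (i : ℕ) : t.del i ⊆ closure (t.V i) := Set.diff_subset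

lemma del_sub_B (i : ℕ) : t.del i ⊆ t.B :=
  (del_sub_clV i).trans (clV_sub_B hG hl i)

lemma del_disj_V (i j : ℕ) (h : i ≤ j) : t.del i ∩ t.V j = ∅ := by
  rw [Set.eq_empty_iff_forall_notMem]
  rintro x ⟨⟨_, hx2⟩, hx3⟩
  exact hx2 (V_mono hG hl h hx3)

lemma G_disj_del (i j : ℕ) : t.G i ∩ t.del j = ∅ := by
  rw [Set.eq_empty_iff_forall_notMem]
  cases i with
  | zero =>
    rintro x ⟨⟨_, hx2⟩, hx3⟩
    exact hx2 (clV_mono hG hl (Nat.zero_le j) hx3.1)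
  | succ k =>
    rintro x ⟨⟨hx1, hx2⟩, hx3⟩
    rcases Nat.lt_or_ge j (k+1) with h' | h'
    · exact hx3.2 (V_mono hG hl (Nat.lt_succ_iff.mp h') hx1)
    · exact hx2 (clV_mono hG hl h' hx3.1)

omit hG hl in
lemma Q_disj_del (j : ℕ) : t.Q ∩ t.del j = ∅ := by
  rw [Set.eq_empty_iff_forall_notMem]
  rintro x ⟨hx1, hx2⟩
  exact hx2.2 (Q_sub_V j hx1)

lemma regs_disj_del ⦃R : Set X⦄ (hR : R ∈ t.regs) (j : ℕ) : R ∩ t.del j = ∅ := by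
  have hR := regs_mem hl hR
  rcases hR with rfl | ⟨i, rfl⟩
  · exact Q_disj_del (t := t) j
  · exact G_disj_del hG hl i j

lemma del_disj_lt {i j : ℕ} (h : i < j) : t.del i ∩ t.del j = ∅ := by
  obtain ⟨k, rfl⟩ := Nat.exists_eq_add_of_lt h
  rw [Set.eq_empty_iff_forall_notMem]
  rintro x ⟨⟨_, hx2⟩, hx3⟩
  exact hx2 (V_mono hG hl (Nat.le_add_right i k)
    (((chain_props hG hl).2.2.2.2 (i+k)) hx3.1))

lemma del_disj {i j : ℕ} (h : i ≠ j) : t.del i ∩ t.del j = ∅ := by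
  rcases Nat.lt_or_ge i j with h' | h'
  · exact del_disj_lt hG hl h'
  · rw [Set.inter_comm]
    exact del_disj_lt hG hl (lt_of_le_of_ne h' (Ne.symm h))

end NodeLemmas


/- ### und / contrib lemmas -/

lemma not_leaf_of_regs {t : Nd X} {R : Set X} (hR : R ∈ t.regs) : t.leaf = false := by
  cases h : t.leaf
  · rfl
  · rw [Nd.regs, h, cond_true] at hR
    exact absurd hR (Set.notMem_empty R)

lemma und_trans {a b c : Nd X} (hGb : Gd b) (hab : und a b) (hbc : und b c) : und a c := by
  obtain ⟨R, hR, hsub⟩ := hab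
  obtain ⟨R', hR', hsub'⟩ := hbc
  have hl : b.leaf = false := not_leaf_of_regs hR
  exact ⟨R', hR', hsub.trans ((regs_sub_B hGb hl hR).trans (subset_closure.trans hsub'))⟩

lemma und_irrefl {t : Nd X} (hG : Gd t) : ¬ und t t := by
  rintro ⟨R, hR, hsub⟩
  have hl := not_leaf_of_regs hR
  obtain ⟨x, hx⟩ := del_ne hG hl 0
  have hxR : x ∈ R := hsub (subset_closure (del_sub_B hG hl 0 hx))
  exact (Set.eq_empty_iff_forall_notMem.mp (regs_disj_del hG hl hR 0) x) ⟨hxR, hx⟩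

lemma und_asymm {a b : Nd X} (hGa : Gd a) (hGb : Gd b) (h1 : und a b) (h2 : und b a) : False :=
  und_irrefl hGa (und_trans hGb h1 h2)

lemma und_B_sub {a b : Nd X} (hGb : Gd b) (h : und a b) : a.B ⊆ b.B := by
  obtain ⟨R, hR, hsub⟩ := h
  exact subset_closure.trans (hsub.trans (regs_sub_B hGb (not_leaf_of_regs hR) hR))

lemma fr_disj_B (t : Nd X) : t.fr ∩ t.B = ∅ := by
  rw [Set.eq_empty_iff_forall_notMem]
  rintro x ⟨⟨_, h2⟩, h3⟩
  exact h2 h3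

lemma contrib_main_sub_B {t : Nd X} (hG : Gd t) (n : ℕ) :
    (if t.leaf then t.pieces n else t.del n) ⊆ t.B := by
  cases hl : t.leaf
  · simpa using del_sub_B hG hl n
  · simpa using (leaf_props hG hl).2.2.1 n

lemma contrib_sub_clB {t : Nd X} (hG : Gd t) (n : ℕ) : contrib t n ⊆ closure t.B := by
  intro x hx
  rcases hx with hx | hx
  · exact subset_closure (contrib_main_sub_B hG n hx)
  · split_ifs at hx
    · exact hx.1
    · exact absurd hx (Set.notMem_empty x)

lemma contrib_self_disj {t : Nd X} (hG : Gd t) {n m : ℕ} (hnm : n ≠ m) :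
    contrib t n ∩ contrib t m = ∅ := by
  rw [Set.eq_empty_iff_forall_notMem]
  rintro x ⟨hxn, hxm⟩
  rcases hxn with h1 | h1 <;> rcases hxm with h2 | h2
  · cases hl : t.leaf
    · rw [hl] at h1 h2
      simp only [Bool.false_eq_true, if_false] at h1 h2
      exact Set.eq_empty_iff_forall_notMem.mp (del_disj hG hl hnm) x ⟨h1, h2⟩
    · rw [hl] at h1 h2
      simp only [if_true] at h1 h2
      exact Set.eq_empty_iff_forall_notMem.mp ((leaf_props hG hl).2.2.2 n m hnm) x ⟨h1, h2⟩
  · split_ifs at h2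
    · exact Set.eq_empty_iff_forall_notMem.mp (fr_disj_B t) x ⟨h2, contrib_main_sub_B hG n h1⟩
    · exact absurd h2 (Set.notMem_empty x)
  · split_ifs at h1
    · exact Set.eq_empty_iff_forall_notMem.mp (fr_disj_B t) x ⟨h1, contrib_main_sub_B hG m h2⟩
    · exact absurd h1 (Set.notMem_empty x)
  · split_ifs at h1 h2 with hc1 hc2
    · exact hnm (hc1 ▸ hc2.symm ▸ rfl)
    · exact absurd h2 (Set.notMem_empty x)
    · exact absurd h1 (Set.notMem_empty x)
    · exact absurd h1 (Set.notMem_empty x)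

lemma regs_disj_contrib {t : Nd X} (hG : Gd t) {R : Set X} (hR : R ∈ t.regs) (n : ℕ) :
    R ∩ contrib t n = ∅ := by
  have hl := not_leaf_of_regs hR
  rw [Set.eq_empty_iff_forall_notMem]
  rintro x ⟨hxR, hxc⟩
  rcases hxc with h1 | h1
  · rw [hl] at h1
    simp only [Bool.false_eq_true, if_false] at h1
    exact Set.eq_empty_iff_forall_notMem.mp (regs_disj_del hG hl hR n) x ⟨hxR, h1⟩
  · split_ifs at h1
    · exact h1.2 (regs_sub_B hG hl hR hxR)
    · exact absurd h1 (Set.notMem_empty x)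

lemma Dst_disj {F : Set (Nd X)} (hA : Adm F) : Pairwise (Function.onFun Disjoint (Dst F)) := by
  intro n m hnm
  rw [Function.onFun, Set.disjoint_left]
  intro x hxn hxm
  simp only [Dst, Set.mem_iUnion] at hxn hxm
  obtain ⟨t, ht, hxt⟩ := hxn
  obtain ⟨u, hu, hxu⟩ := hxm
  by_cases htu : t = u
  · subst htu
    exact Set.eq_empty_iff_forall_notMem.mp (contrib_self_disj (hA.1 t ht) hnm) x ⟨hxt, hxu⟩
  · rcases hA.2.1 t ht u hu htu with hd | hund | hund
    · exact Set.eq_empty_iff_forall_notMem.mp hd x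
        ⟨contrib_sub_clB (hA.1 t ht) n hxt, contrib_sub_clB (hA.1 u hu) m hxu⟩
    · obtain ⟨R, hR, hsub⟩ := hund
      exact Set.eq_empty_iff_forall_notMem.mp (regs_disj_contrib (hA.1 u hu) hR m) x
        ⟨hsub (contrib_sub_clB (hA.1 t ht) n hxt), hxu⟩
    · obtain ⟨R, hR, hsub⟩ := hund
      exact Set.eq_empty_iff_forall_notMem.mp (regs_disj_contrib (hA.1 t ht) hR n) x
        ⟨hsub (contrib_sub_clB (hA.1 u hu) m hxu), hxt⟩


/- ### node construction -/

section Construction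

variable (hqr : ∀ U : Set X, IsOpen U → U.Nonempty →
      ∃ V : Set X, IsOpen V ∧ V.Nonempty ∧ closure V ⊆ U)
variable {𝓑 : Set (Set X)} (h𝓑 : ∀ B ∈ 𝓑, IsOpen B ∧ B.Nonempty ∧ IsConnected B)
  (h𝓑2 : ∀ U : Set X, IsOpen U → U.Nonempty → ∃ B ∈ 𝓑, B ⊆ U)
variable (hni : ¬ ∃ U : Set X, IsOpen U ∧ U.Nonempty ∧ U.Finite ∧
      ∀ V : Set X, IsOpen V → V ∩ U = ∅ ∨ U ⊆ V)

include hqr h𝓑 h𝓑2 hni in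
lemma exists_node (W : Set X) (hWo : IsOpen W) (hWne : W.Nonempty) (k : ℕ) :
    ∃ t : Nd X, Gd t ∧ closure t.B ⊆ W ∧ t.idx = k := by
  obtain ⟨N, hNo, hNne, hNcl⟩ := hqr W hWo hWne
  obtain ⟨B', hB'mem, hB'sub⟩ := h𝓑2 N hNo hNne
  obtain ⟨hB'o, hB'ne, hB'conn⟩ := h𝓑 B' hB'mem
  have hclB' : closure B' ⊆ W := (closure_mono hB'sub).trans hNcl
  by_cases hind : ∀ U : Set X, IsOpen U → U ∩ B' = ∅ ∨ B' ⊆ U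
  · -- indiscrete: leaf node
    have hinf : B'.Infinite := by
      by_contra hfin
      rw [Set.not_infinite] at hfin
      exact hni ⟨B', hB'o, hB'ne, hfin, hind⟩
    let e := hinf.natEmbedding
    refine ⟨⟨B', true, fun _ => ∅, fun n => {(e n).1}, k⟩, ?_, hclB', rfl⟩
    refine ⟨hB'o, hB'ne, hB'conn.isPreconnected, fun _ => ⟨hind,
      fun n => ⟨(e n).1, rfl⟩, fun n => Set.singleton_subset_iff.mpr (e n).2,
      fun n m hnm => ?_⟩, fun h => by simp at h⟩
    rw [Set.eq_empty_iff_forall_notMem]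
    rintro x ⟨hx1, hx2⟩
    rw [Set.mem_singleton_iff] at hx1 hx2
    exact hnm (by
      have : e n = e m := Subtype.ext (hx1.symm.trans hx2)
      exact e.injective this)
  · -- chain node
    push_neg at hind
    obtain ⟨U₀, hU₀o, hU₀1, hU₀2⟩ := hind
    set W₁ := U₀ ∩ B' with hW₁
    have hW₁o : IsOpen W₁ := hU₀o.inter hB'o
    have hW₁ne : W₁.Nonempty := hU₀1
    let T := {p : Set X // IsOpen p ∧ p.Nonempty}
    have hqr' : ∀ p : T, ∃ V : Set X, IsOpen V ∧ V.Nonempty ∧ closure V ⊆ p.1 :=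
      fun p => hqr p.1 p.2.1 p.2.2
    let g : T → T := fun p => ⟨(hqr' p).choose, (hqr' p).choose_spec.1, (hqr' p).choose_spec.2.1⟩
    have gcl : ∀ p : T, closure (g p).1 ⊆ p.1 := fun p => (hqr' p).choose_spec.2.2
    let seq : ℕ → T := fun n => g^[n] (g ⟨W₁, hW₁o, hW₁ne⟩)
    have hseq : ∀ n, seq (n+1) = g (seq n) := by
      intro n
      simp only [seq, Function.iterate_succ_apply']
    refine ⟨⟨B', false, fun n => (seq n).1, fun _ => ∅, k⟩, ?_, hclB', rfl⟩
    obtain ⟨y, hy1, hy2⟩ : ∃ y, y ∈ B' ∧ y ∉ U₀ := by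
      by_contra h
      push_neg at h
      exact hU₀2 h
    have hseq0 : closure (seq 0).1 ⊆ W₁ := gcl ⟨W₁, hW₁o, hW₁ne⟩
    refine ⟨hB'o, hB'ne, hB'conn.isPreconnected, fun h => by simp at h,
      fun _ => ⟨fun i => (seq i).2.1, fun i => (seq i).2.2,
        hseq0.trans (Set.inter_subset_right), ⟨y, hy1, fun hy => hy2 ?_⟩,
        fun i => by
          show closure (↑(seq (i+1)) : Set X) ⊆ (↑(seq i) : Set X)
          rw [hseq i]; exact gcl (seq i)⟩⟩
    exact (Set.inter_subset_left (subset_closure.trans hseq0 hy))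

/- ### Zorn: a maximal admissible family -/

lemma Adm_empty : Adm (∅ : Set (Nd X)) := by
  refine ⟨fun t ht => absurd ht (Set.notMem_empty t),
    fun s hs => absurd hs (Set.notMem_empty s),
    fun S hS hne _ => absurd (hS hne.some_mem) (Set.notMem_empty _),
    fun s hs => absurd hs (Set.notMem_empty s)⟩

lemma ee_trans {F G H : Set (Nd X)} (h1 : ee F G) (h2 : ee G H) : ee F H := by
  refine ⟨h1.1.trans h2.1, fun s hs hsF t ht => ?_⟩
  by_cases hsG : s ∈ G
  · exact h1.2 s hsG hsF t ht
  · exact h2.2 s hs hsG t (h1.1 ht)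

lemma ee_refl (F : Set (Nd X)) : ee F F := ⟨subset_rfl, fun s hs hns _ _ => (hns hs).elim⟩

lemma Adm_union {c : Set {F : Set (Nd X) // Adm F}}
    (hc : IsChain (fun a b => ee a.1 b.1) c) :
    Adm (⋃ a ∈ c, a.1) ∧ ∀ a ∈ c, ee a.1 (⋃ a ∈ c, a.1) := by
  set U := ⋃ a ∈ c, a.1 with hU
  have hmem : ∀ {t : Nd X}, t ∈ U → ∃ a ∈ c, t ∈ a.1 := by
    intro t ht
    simpa [hU] using ht
  have hmem' : ∀ {a : {F : Set (Nd X) // Adm F}}, a ∈ c → a.1 ⊆ U := by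
    intro a ha t ht
    simp only [hU, Set.mem_iUnion]
    exact ⟨a, ha, ht⟩
  have hdir : ∀ {a b : {F : Set (Nd X) // Adm F}}, a ∈ c → b ∈ c →
      a.1 ⊆ b.1 ∨ b.1 ⊆ a.1 := by
    intro a b ha hb
    by_cases hab : a = b
    · exact Or.inl (hab ▸ subset_rfl)
    · rcases hc ha hb hab with h | h
      · exact Or.inl h.1
      · exact Or.inr h.1
  -- key: upward closure within a member
  have hup : ∀ {a : {F : Set (Nd X) // Adm F}}, a ∈ c → ∀ {s₀ s : Nd X}, s₀ ∈ a.1 →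
      s ∈ U → und s₀ s → s ∈ a.1 := by
    intro a ha s₀ s hs₀ hs hund
    obtain ⟨b, hb, hsb⟩ := hmem hs
    by_cases hab : a = b
    · exact hab ▸ hsb
    · rcases hc ha hb hab with h | h
      · by_contra hsa
        exact h.2 s hsb hsa s₀ hs₀ hund
      · exact h.1 hsb
  constructor
  · refine ⟨?_, ?_, ?_, ?_⟩
    · intro t ht
      obtain ⟨a, ha, hta⟩ := hmem ht
      exact a.2.1 t hta
    · intro s hs t ht hst
      obtain ⟨a, ha, hsa⟩ := hmem hs
      obtain ⟨b, hb, htb⟩ := hmem ht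
      rcases hdir ha hb with h | h
      · exact b.2.2.1 s (h hsa) t htb hst
      · exact a.2.2.1 s hsa t (h htb) hst
    · intro S hS hne hcomp
      obtain ⟨s₀, hs₀⟩ := hne
      obtain ⟨a, ha, hs₀a⟩ := hmem (hS hs₀)
      set T' := {s ∈ S | s = s₀ ∨ und s₀ s} with hT'
      have hT'a : T' ⊆ a.1 := by
        rintro s ⟨hsS, hs | hs⟩
        · exact hs ▸ hs₀a
        · exact hup ha hs₀a (hS hsS) hs
      obtain ⟨m, hmT', hm⟩ := a.2.2.2.1 T' hT'a ⟨s₀, hs₀, Or.inl rfl⟩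
        (fun x hx y hy => hcomp x hx.1 y hy.1)
      refine ⟨m, hmT'.1, fun s hsS => ?_⟩
      rcases hcomp s hsS s₀ hs₀ with rfl | h | h
      · exact hm s ⟨hs₀, Or.inl rfl⟩
      · rcases hm s₀ ⟨hs₀, Or.inl rfl⟩ with rfl | h'
        · exact Or.inr h
        · exact Or.inr (und_trans (a.2.1 s₀ hs₀a) h h')
      · exact hm s ⟨hsS, Or.inr h⟩
    · intro s hs t ht hund hnw
      obtain ⟨a, ha, hsa⟩ := hmem hs
      obtain ⟨b, hb, htb⟩ := hmem ht
      rcases hdir ha hb with h | h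
      · exact b.2.2.2.2 s (h hsa) t htb hund (fun u hu => hnw u (hmem' hb hu))
      · exact a.2.2.2.2 s hsa t (h htb) hund (fun u hu => hnw u (hmem' ha hu))
  · intro a ha
    refine ⟨hmem' ha, fun s hs hsa t ht hund => ?_⟩
    obtain ⟨b, hb, hsb⟩ := hmem hs
    by_cases hab : a = b
    · exact hsa (hab ▸ hsb)
    · rcases hc ha hb hab with h | h
      · exact h.2 s hsb hsa t ht hund
      · exact hsa (h.1 hsb)

lemma exists_maximal_Adm :
    ∃ F : Set (Nd X), Adm F ∧ ∀ G : Set (Nd X), Adm G → ee F G → ee G F := by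
  obtain ⟨m, hm⟩ := exists_maximal_of_chains_bounded
    (r := fun a b : {F : Set (Nd X) // Adm F} => ee a.1 b.1)
    (fun c hc => by
      by_cases hce : c.Nonempty
      · exact ⟨⟨⋃ a ∈ c, a.1, (Adm_union hc).1⟩, (Adm_union hc).2⟩
      · exact ⟨⟨∅, Adm_empty⟩, fun a ha => (hce ⟨a, ha⟩).elim⟩)
    (fun {a b c} h1 h2 => ee_trans h1 h2)
  exact ⟨m.1, m.2, fun G hG h => hm ⟨G, hG⟩ h⟩

end Construction


/- ### the key insertion lemma -/

section Insertion

variable (hqr : ∀ U : Set X, IsOpen U → U.Nonempty →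
      ∃ V : Set X, IsOpen V ∧ V.Nonempty ∧ closure V ⊆ U)
variable {𝓑 : Set (Set X)} (h𝓑 : ∀ B ∈ 𝓑, IsOpen B ∧ B.Nonempty ∧ IsConnected B)
  (h𝓑2 : ∀ U : Set X, IsOpen U → U.Nonempty → ∃ B ∈ 𝓑, B ⊆ U)
variable (hni : ¬ ∃ U : Set X, IsOpen U ∧ U.Nonempty ∧ U.Finite ∧
      ∀ V : Set X, IsOpen V → V ∩ U = ∅ ∨ U ⊆ V)
variable {F : Set (Nd X)} (hA : Adm F)
  (hmax : ∀ G : Set (Nd X), Adm G → ee F G → ee G F)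

include hqr h𝓑 h𝓑2 hni hA hmax in
lemma key_insert {W : Set X} (hWo : IsOpen W) (hWne : W.Nonempty)
    (H : ∀ s ∈ F, (closure s.B ∩ W).Nonempty → ∃ R ∈ s.regs, W ⊆ R) : False := by
  obtain ⟨t0, hGt0, hclt0, _⟩ := exists_node hqr h𝓑 h𝓑2 hni W hWo hWne 0
  classical
  set A : Set (Nd X) := {s ∈ F | und t0 s} with hAdef
  set j : ℕ := if h : ∃ p ∈ A, ∀ s ∈ A, s = p ∨ und p s then h.choose.idx + 1 else 0 with hjdef
  set nw : Nd X := ⟨t0.B, t0.leaf, t0.V, t0.pieces, j⟩ with hnw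
  have hGnew : Gd nw := hGt0
  have hclnew : closure nw.B ⊆ W := hclt0
  have hBne : nw.B.Nonempty := hGnew.2.1
  have hundnw : ∀ s, und nw s ↔ und t0 s := fun s => Iff.rfl
  -- no old node is under the new one
  have hnotunder : ∀ s ∈ F, ¬ und s nw := by
    rintro s hs ⟨R, hR, hsub⟩
    have hls : nw.leaf = false := not_leaf_of_regs hR
    have h1 : closure s.B ⊆ W := hsub.trans
      ((regs_sub_B hGnew hls hR).trans (subset_closure.trans hclnew))
    obtain ⟨R', hR', hWR'⟩ := H s hs (by
      obtain ⟨x, hx⟩ := (hA.1 s hs).2.1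
      exact ⟨x, subset_closure hx, h1 (subset_closure hx)⟩)
    exact und_irrefl (hA.1 s hs) ⟨R', hR', h1.trans hWR'⟩
  -- any old node whose closure meets the new closure is above the new node
  have hmeets : ∀ s ∈ F, (closure s.B ∩ closure nw.B).Nonempty → und nw s := by
    intro s hs hne
    obtain ⟨R, hR, hWR⟩ := H s hs (hne.mono (Set.inter_subset_inter_right _ hclnew))
    exact ⟨R, hR, hclnew.trans hWR⟩
  -- the new node is not in F
  have hnwF : nw ∉ F := by
    intro hmem
    obtain ⟨R, hR, hWR⟩ := H nw hmem (by
      obtain ⟨x, hx⟩ := hBne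
      exact ⟨x, subset_closure hx, hclnew (subset_closure hx)⟩)
    exact und_irrefl hGnew ⟨R, hR, hclnew.trans hWR⟩
  -- the extended family is admissible
  have hAdm' : Adm (insert nw F) := by
    refine ⟨?_, ?_, ?_, ?_⟩
    · rintro t (rfl | ht)
      · exact hGnew
      · exact hA.1 t ht
    · rintro s (rfl | hsF) t (rfl | htF) hst
      · exact absurd rfl hst
      · by_cases hne : (closure t.B ∩ closure nw.B).Nonempty
        · exact Or.inr (Or.inl (hmeets t htF hne))
        · refine Or.inl ?_
          rw [Set.not_nonempty_iff_eq_empty] at hne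
          rw [Set.inter_comm]
          exact hne
      · by_cases hne : (closure s.B ∩ closure nw.B).Nonempty
        · exact Or.inr (Or.inr (hmeets s hsF hne))
        · exact Or.inl (Set.not_nonempty_iff_eq_empty.mp hne)
      · exact hA.2.1 s hsF t htF hst
    · intro S hS hne hcomp
      by_cases hnwS : nw ∈ S
      · by_cases hS' : (S \ {nw}).Nonempty
        · have hsub : S \ {nw} ⊆ F := by
            rintro x ⟨hx1, hx2⟩
            rcases hS hx1 with rfl | h
            · exact absurd rfl hx2
            · exact h
          obtain ⟨m, hm1, hm2⟩ := hA.2.2.1 (S \ {nw}) hsub hS'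
            (fun a ha b hb => hcomp a ha.1 b hb.1)
          refine ⟨m, hm1.1, fun u hu => ?_⟩
          by_cases hunw : u = nw
          · subst hunw
            rcases hcomp nw hu m hm1.1 with h | h | h
            · exact Or.inl h
            · exact Or.inr h
            · exact absurd h (hnotunder m (hsub hm1))
          · exact hm2 u ⟨hu, hunw⟩
        · rw [Set.not_nonempty_iff_eq_empty, Set.diff_eq_empty] at hS'
          refine ⟨nw, hnwS, fun u hu => Or.inl ?_⟩
          rcases hS' hu with h
          simpa using h
      · exact hA.2.2.1 S (fun x hx => (hS hx).resolve_left (fun h => hnwS (h ▸ hx))) hne hcomp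
    · rintro s (rfl | hsF) t (rfl | htF) hund hnw'
      · exact absurd hund (und_irrefl hGnew)
      · -- the crucial index computation
        have htA : t ∈ A := ⟨htF, hund⟩
        have hinner : ∀ u ∈ A, u = t ∨ und t u := by
          rintro u ⟨huF, huund⟩
          by_cases hut : u = t
          · exact Or.inl hut
          · rcases hA.2.1 u huF t htF hut with hd | h | h
            · exfalso
              obtain ⟨x, hx⟩ := hBne
              obtain ⟨R, hR, hsubR⟩ := huund
              obtain ⟨R', hR', hsubR'⟩ := hund
              have hxu : x ∈ closure u.B := subset_closure
                ((regs_sub_B (hA.1 u huF) (not_leaf_of_regs hR) hR) (hsubR (subset_closure hx)))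
              have hxt : x ∈ closure t.B := subset_closure
                ((regs_sub_B (hA.1 t htF) (not_leaf_of_regs hR') hR') (hsubR' (subset_closure hx)))
              exact Set.eq_empty_iff_forall_notMem.mp hd x ⟨hxu, hxt⟩
            · exact absurd ⟨huund, h⟩ (hnw' u (Or.inr huF))
            · exact Or.inr h
        have hex : ∃ p ∈ A, ∀ s ∈ A, s = p ∨ und p s := ⟨t, htA, hinner⟩
        show nw.idx = t.idx + 1
        have hj1 : nw.idx = hex.choose.idx + 1 := by
          show j = _
          rw [hjdef]
          rw [dif_pos hex]
        rw [hj1]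
        congr 1
        obtain ⟨hp1, hp2⟩ := hex.choose_spec
        rcases hp2 t htA with h | h
        · rw [← h]
        · rcases hinner hex.choose hp1 with h' | h'
          · rw [h']
          · exact (und_asymm (hA.1 _ hp1.1) (hA.1 t htF) h h').elim
      · exact absurd hund (hnotunder s hsF)
      · exact hA.2.2.2 s hsF t htF hund (fun u hu => hnw' u (Or.inr hu))
  -- end extension
  have hee : ee F (insert nw F) := by
    refine ⟨Set.subset_insert _ _, ?_⟩
    rintro s (rfl | hsF) hnotF t htF
    · exact hnotunder t htF  -- wrong direction? need ¬ und t nw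
    · exact absurd hsF hnotF
  have := (hmax _ hAdm' hee).1
  exact hnwF (this (Set.mem_insert nw F))

end Insertion


/- ### saturation corollaries and the step lemma -/

section Saturation

variable (hqr : ∀ U : Set X, IsOpen U → U.Nonempty →
      ∃ V : Set X, IsOpen V ∧ V.Nonempty ∧ closure V ⊆ U)
variable {𝓑 : Set (Set X)} (h𝓑 : ∀ B ∈ 𝓑, IsOpen B ∧ B.Nonempty ∧ IsConnected B)
  (h𝓑2 : ∀ U : Set X, IsOpen U → U.Nonempty → ∃ B ∈ 𝓑, B ⊆ U)
variable (hni : ¬ ∃ U : Set X, IsOpen U ∧ U.Nonempty ∧ U.Finite ∧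
      ∀ V : Set X, IsOpen V → V ∩ U = ∅ ∨ U ⊆ V)
variable {F : Set (Nd X)} (hA : Adm F)
  (hmax : ∀ G : Set (Nd X), Adm G → ee F G → ee G F)

include hqr h𝓑 h𝓑2 hni hA hmax

lemma sat_global {W : Set X} (hWo : IsOpen W) (hWne : W.Nonempty) :
    ∃ s ∈ F, (closure s.B ∩ W).Nonempty := by
  by_contra hno
  push_neg at hno
  refine key_insert hqr h𝓑 h𝓑2 hni hA hmax hWo hWne (fun s hs hne => ?_)
  exact absurd hne (by
    rw [hno s hs]
    exact Set.not_nonempty_empty)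

lemma sat_region {t : Nd X} (ht : t ∈ F) {R : Set X} (hR : R ∈ t.regs) {W : Set X}
    (hWo : IsOpen W) (hWne : W.Nonempty) (hWR : W ⊆ R) :
    ∃ s ∈ F, und s t ∧ (s.B ∩ W).Nonempty := by
  have hGt := hA.1 t ht
  have hl := not_leaf_of_regs hR
  by_contra hno
  push_neg at hno
  refine key_insert hqr h𝓑 h𝓑2 hni hA hmax hWo hWne (fun s hs hne => ?_)
  by_cases hst : s = t
  · subst hst
    exact ⟨R, hR, hWR⟩
  · rcases hA.2.1 s hs t ht hst with hd | h1 | h1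
    · exfalso
      have hsub : W ⊆ closure t.B :=
        hWR.trans ((regs_sub_B hGt hl hR).trans subset_closure)
      obtain ⟨x, hx1, hx2⟩ := hne
      exact Set.eq_empty_iff_forall_notMem.mp hd x ⟨hx1, hsub hx2⟩
    · exfalso
      have : (W ∩ s.B).Nonempty := open_inter_closure_nonempty hWo
        (by rwa [Set.inter_comm] at hne)
      rw [Set.inter_comm] at this
      exact absurd this (by
        rw [hno s hs h1]
        exact Set.not_nonempty_empty)
    · obtain ⟨R', hR', hsub⟩ := h1
      exact ⟨R', hR', hWR.trans ((regs_sub_B hGt hl hR).trans (subset_closure.trans hsub))⟩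

end Saturation

lemma Q_mem_regs {t : Nd X} (hl : t.leaf = false) : t.Q ∈ t.regs := by
  rw [Nd.regs, hl, cond_false]
  exact Set.mem_insert _ _

lemma G_mem_regs {t : Nd X} (hl : t.leaf = false) (i : ℕ) : t.G i ∈ t.regs := by
  rw [Nd.regs, hl, cond_false]
  exact Set.mem_insert_iff.mpr (Or.inr ⟨i, rfl⟩)

lemma beta_gap {t : Nd X} (hG : Gd t) (hl : t.leaf = false) {W : Set X} (hWo : IsOpen W)
    (hWne : W.Nonempty) (hWB : W ⊆ t.B) {n : ℕ} (hWn : W ∩ closure (t.V n) = ∅) :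
    ∃ i, (W ∩ t.G i).Nonempty := by
  by_contra hg
  push_neg at hg
  have hg' : ∀ i, W ∩ t.G i = ∅ := hg
  have hW0 : W ⊆ closure (t.V 0) := by
    intro x hx
    by_contra hxn
    exact Set.eq_empty_iff_forall_notMem.mp (hg' 0) x ⟨hx, hWB hx, hxn⟩
  have key : ∀ k, (W ∩ t.V k).Nonempty := by
    intro k
    induction k with
    | zero => exact open_subset_closure_nonempty hWo hWne hW0
    | succ m ih =>
      have hsub : W ∩ t.V m ⊆ closure (t.V (m+1)) := by
        rintro x ⟨hx1, hx2⟩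
        by_contra hxn
        exact Set.eq_empty_iff_forall_notMem.mp (hg' (m+1)) x ⟨hx1, hx2, hxn⟩
      have := open_subset_closure_nonempty (hWo.inter ((chain_props hG hl).1 m)) ih hsub
      exact this.mono (fun x hx => ⟨hx.1.1, hx.2⟩)
  obtain ⟨x, hx1, hx2⟩ := key n
  exact Set.eq_empty_iff_forall_notMem.mp hWn x ⟨hx1, subset_closure hx2⟩

section StepLemma

variable (hqr : ∀ U : Set X, IsOpen U → U.Nonempty →
      ∃ V : Set X, IsOpen V ∧ V.Nonempty ∧ closure V ⊆ U)
variable {𝓑 : Set (Set X)} (h𝓑 : ∀ B ∈ 𝓑, IsOpen B ∧ B.Nonempty ∧ IsConnected B)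
  (h𝓑2 : ∀ U : Set X, IsOpen U → U.Nonempty → ∃ B ∈ 𝓑, B ⊆ U)
variable (hni : ¬ ∃ U : Set X, IsOpen U ∧ U.Nonempty ∧ U.Finite ∧
      ∀ V : Set X, IsOpen V → V ∩ U = ∅ ∨ U ⊆ V)
variable {F : Set (Nd X)} (hA : Adm F)
  (hmax : ∀ G : Set (Nd X), Adm G → ee F G → ee G F)

include hqr h𝓑 h𝓑2 hni hA hmax in
lemma step_lemma {t : Nd X} (ht : t ∈ F) (hl : t.leaf = false)
    {O : Set X} (hOo : IsOpen O) (hOpre : IsPreconnected O)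
    (hOB : (O ∩ t.B).Nonempty) {n : ℕ}
    (hD : ∀ s ∈ F, O ∩ contrib s n = ∅) :
    ∃ s ∈ F, und s t ∧ (O ∩ s.B).Nonempty := by
  classical
  have hG := hA.1 t ht
  have hOne : O.Nonempty := hOB.mono (Set.inter_subset_left)
  have fromRegion : ∀ (R : Set X), R ∈ t.regs → ∀ (W : Set X), IsOpen W → W.Nonempty →
      W ⊆ R → W ⊆ O → ∃ s ∈ F, und s t ∧ (O ∩ s.B).Nonempty := by
    intro R hR W hWo hWne hWR hWO
    obtain ⟨s, hs, hund, hne⟩ := sat_region hqr h𝓑 h𝓑2 hni hA hmax ht hR hWo hWne hWR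
    exact ⟨s, hs, hund, hne.mono (fun x hx => ⟨hWO hx.2, hx.1⟩)⟩
  have hnostrad : ¬ ((O ∩ closure (t.V n)).Nonempty ∧ (O \ closure (t.V n)).Nonempty) := by
    rintro ⟨h1, h2⟩
    obtain ⟨x, hx1, hx2⟩ := straddle hOpre ((chain_props hG hl).1 n) h1 h2
    have hxc : x ∈ contrib t n := by
      apply Set.mem_union_left
      simp only [hl, Bool.false_eq_true, if_false]
      exact hx2
    exact (Set.eq_empty_iff_forall_notMem.mp (hD t ht) x) ⟨hx1, hxc⟩
  by_cases hcap : (O ∩ closure (t.V n)).Nonempty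
  · have hOsub : O ⊆ closure (t.V n) := by
      intro x hx
      by_contra hxn
      exact hnostrad ⟨hcap, ⟨x, hx, hxn⟩⟩
    by_cases hout : ∀ k, O ⊆ closure (t.V k)
    · -- the core case: O sits inside Q
      have h1 : O ⊆ ⋂ i, t.V i := by
        intro x hx
        rw [Set.mem_iInter]
        intro i
        exact (chain_props hG hl).2.2.2.2 i (hout (i+1) hx)
      have hQ : O ⊆ t.Q := by
        show O ⊆ interior (⋂ i, t.V i)
        exact interior_maximal h1 hOo
      exact fromRegion t.Q (Q_mem_regs hl) O hOo hOne hQ subset_rfl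
    · push_neg at hout
      have hex : ∃ k, ¬ O ⊆ closure (t.V k) := hout
      set m := Nat.find hex with hm
      have hmspec : ¬ O ⊆ closure (t.V m) := Nat.find_spec hex
      have hmmin : ∀ j, j < m → O ⊆ closure (t.V j) := fun j hj => by
        by_contra h
        exact Nat.find_min hex hj h
      have hm0 : m ≠ 0 := by
        intro h0
        exact hmspec (by
          rw [h0]
          exact hOsub.trans (clV_mono hG hl (Nat.zero_le n)))
      obtain ⟨k₀, hk₀⟩ := Nat.exists_eq_succ_of_ne_zero hm0
      have hOk₀ : O ⊆ closure (t.V k₀) := hmmin k₀ (by omega)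
      set W' := O \ closure (t.V m) with hW'
      have hW'o : IsOpen W' := hOo.sdiff isClosed_closure
      have hW'ne : W'.Nonempty := by
        rw [Set.nonempty_iff_ne_empty]
        intro h
        exact hmspec (fun x hx => by
          by_contra hxn
          exact Set.eq_empty_iff_forall_notMem.mp h x ⟨hx, hxn⟩)
      have hW'sub : W' ⊆ closure (t.V k₀) := (Set.diff_subset).trans hOk₀
      have hW'' : (W' ∩ t.V k₀).Nonempty :=
        open_subset_closure_nonempty hW'o hW'ne hW'sub
      refine fromRegion (t.G m) (G_mem_regs hl m) (W' ∩ t.V k₀)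
        (hW'o.inter ((chain_props hG hl).1 k₀)) hW'' ?_ ?_
      · rintro x ⟨⟨_, hx2⟩, hx3⟩
        have hmeq : k₀ + 1 = m := by omega
        rw [← hmeq]
        show x ∈ t.V k₀ \ closure (t.V (k₀+1))
        refine ⟨hx3, ?_⟩
        rw [hmeq]
        exact hx2
      · exact fun x hx => hx.1.1
  · -- O misses the chain entirely: it meets a gap
    have hWo : IsOpen (O ∩ t.B) := hOo.inter hG.1
    have hWn : (O ∩ t.B) ∩ closure (t.V n) = ∅ := by
      rw [Set.not_nonempty_iff_eq_empty] at hcap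
      rw [Set.eq_empty_iff_forall_notMem]
      rintro x ⟨⟨hx1, _⟩, hx3⟩
      exact Set.eq_empty_iff_forall_notMem.mp hcap x ⟨hx1, hx3⟩
    obtain ⟨i, hGi⟩ := beta_gap hG hl hWo hOB (Set.inter_subset_right) hWn
    exact fromRegion (t.G i) (G_mem_regs hl i) ((O ∩ t.B) ∩ t.G i)
      (hWo.inter (G_open hG hl i)) hGi (Set.inter_subset_right)
      (fun x hx => hx.1.1)

end StepLemma


/- ### the density lemma -/

section Density

variable (hqr : ∀ U : Set X, IsOpen U → U.Nonempty →
      ∃ V : Set X, IsOpen V ∧ V.Nonempty ∧ closure V ⊆ U)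
variable {𝓑 : Set (Set X)} (h𝓑 : ∀ B ∈ 𝓑, IsOpen B ∧ B.Nonempty ∧ IsConnected B)
  (h𝓑2 : ∀ U : Set X, IsOpen U → U.Nonempty → ∃ B ∈ 𝓑, B ⊆ U)
variable (hni : ¬ ∃ U : Set X, IsOpen U ∧ U.Nonempty ∧ U.Finite ∧
      ∀ V : Set X, IsOpen V → V ∩ U = ∅ ∨ U ⊆ V)
variable {F : Set (Nd X)} (hA : Adm F)
  (hmax : ∀ G : Set (Nd X), Adm G → ee F G → ee G F)

include hqr h𝓑 h𝓑2 hni hA hmax in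
lemma density {O : Set X} (hOo : IsOpen O) (hOne : O.Nonempty) (hOpre : IsPreconnected O)
    (n : ℕ) : (O ∩ Dst F n).Nonempty := by
  classical
  by_contra h0
  have hD : ∀ s ∈ F, O ∩ contrib s n = ∅ := by
    intro s hs
    rw [Set.eq_empty_iff_forall_notMem]
    rintro x ⟨hx1, hx2⟩
    exact h0 ⟨x, hx1, Set.mem_iUnion₂.mpr ⟨s, hs, hx2⟩⟩
  have hnoleaf : ∀ t ∈ F, (O ∩ t.B).Nonempty → t.leaf = false := by
    intro t ht hOB
    cases hlf : t.leaf
    · rfl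
    · exfalso
      obtain ⟨hind, hpne, hpsub, _⟩ := leaf_props (hA.1 t ht) hlf
      rcases hind O hOo with hd | hsub
      · exact Set.eq_empty_iff_forall_notMem.mp hd hOB.some ⟨hOB.some_mem.1, hOB.some_mem.2⟩
      · obtain ⟨x, hx⟩ := hpne n
        have hxc : x ∈ O ∩ contrib t n := ⟨hsub (hpsub n hx),
          Set.mem_union_left _ (by simp only [hlf, if_true]; exact hx)⟩
        exact Set.eq_empty_iff_forall_notMem.mp (hD t ht) x hxc
  set E : Set (Nd X) := {t | t ∈ F ∧ (O ∩ t.B).Nonempty} with hE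
  obtain ⟨t₁, ht₁F, ht₁ne⟩ := sat_global hqr h𝓑 h𝓑2 hni hA hmax hOo hOne
  have ht₁E : t₁ ∈ E := ⟨ht₁F, by
    have h := open_inter_closure_nonempty hOo (by rwa [Set.inter_comm] at ht₁ne)
    exact h⟩
  -- a maximal chain inside E
  obtain ⟨𝒯, h𝒯t₁, h𝒯max⟩ := zorn_subset_nonempty {C : Set (Nd X) | C ⊆ E ∧ IsChain und C}
    (fun c hcS hcC hcne => by
      refine ⟨⋃₀ c, ⟨Set.sUnion_subset (fun C hC => (hcS hC).1), ?_⟩,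
        fun C hC => Set.subset_sUnion_of_mem hC⟩
      intro x hx y hy hxy
      obtain ⟨C₁, hC₁, hx₁⟩ := hx
      obtain ⟨C₂, hC₂, hy₂⟩ := hy
      by_cases h12 : C₁ = C₂
      · exact (hcS hC₂).2 (h12 ▸ hx₁) hy₂ hxy
      · rcases hcC hC₁ hC₂ h12 with h | h
        · exact (hcS hC₂).2 (h hx₁) hy₂ hxy
        · exact (hcS hC₁).2 hx₁ (h hy₂) hxy)
    {t₁} (by
      refine ⟨Set.singleton_subset_iff.mpr ht₁E, ?_⟩
      intro x hx y hy hxy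
      rw [Set.mem_singleton_iff] at hx hy
      exact absurd (hx.trans hy.symm) hxy)
  have h𝒯E : 𝒯 ⊆ E := h𝒯max.1.1
  have h𝒯chain : IsChain und 𝒯 := h𝒯max.1.2
  have h𝒯F : ∀ t ∈ 𝒯, t ∈ F := fun t ht => (h𝒯E ht).1
  have hGd : ∀ t ∈ 𝒯, Gd t := fun t ht => hA.1 t (h𝒯F t ht)
  have h𝒯ne : 𝒯.Nonempty := ⟨t₁, h𝒯t₁ rfl⟩
  -- extension principle for the maximal chain
  have hext : ∀ u, u ∈ E → (∀ v ∈ 𝒯, u = v ∨ und u v ∨ und v u) → u ∈ 𝒯 := by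
    intro u huE hcomp
    have hins : insert u 𝒯 ∈ {C : Set (Nd X) | C ⊆ E ∧ IsChain und C} := by
      constructor
      · exact Set.insert_subset huE h𝒯E
      · intro x hx y hy hxy
        rcases hx with rfl | hx
        · rcases hy with rfl | hy
          · exact absurd rfl hxy
          · rcases hcomp y hy with h | h | h
            · exact absurd h hxy
            · exact Or.inl h
            · exact Or.inr h
        · rcases hy with rfl | hy
          · rcases hcomp x hx with h | h | h
            · exact absurd h.symm hxy
            · exact Or.inr h
            · exact Or.inl h
          · exact h𝒯chain hx hy hxy
    have := h𝒯max.2 hins (Set.subset_insert u 𝒯)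
    exact this (Set.mem_insert u 𝒯)
  -- the chain has no minimum
  have hnomin : ∀ t ∈ 𝒯, ∃ s ∈ 𝒯, und s t := by
    intro t ht𝒯
    by_contra hmin
    push_neg at hmin
    obtain ⟨s, hsF, hsund, hsO⟩ := step_lemma hqr h𝓑 h𝓑2 hni hA hmax (h𝒯F t ht𝒯)
      (hnoleaf t (h𝒯F t ht𝒯) (h𝒯E ht𝒯).2) hOo hOpre (h𝒯E ht𝒯).2 hD
    have hs𝒯 : s ∈ 𝒯 := by
      refine hext s ⟨hsF, hsO⟩ (fun v hv => ?_)
      by_cases hvt : v = t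
      · exact Or.inr (Or.inl (hvt ▸ hsund))
      · rcases h𝒯chain hv ht𝒯 hvt with h | h
        · exact (hmin v hv h).elim
        · exact Or.inr (Or.inl (und_trans (hGd t ht𝒯) hsund h))
    exact hmin s hs𝒯 hsund
  by_cases hcaseA : ∃ ts ∈ 𝒯, (O \ closure ts.B).Nonempty
  · -- Case A: harvest frontiers along an inner-successor sequence
    obtain ⟨ts, hts𝒯, htsO⟩ := hcaseA
    have hsig : ∀ t ∈ 𝒯, ∃ m ∈ 𝒯, und m t ∧ ∀ s ∈ 𝒯, und s t → (s = m ∨ und s m) := by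
      intro t ht𝒯
      set S : Set (Nd X) := {s | s ∈ 𝒯 ∧ und s t} with hS
      have hSsub : S ⊆ F := fun s hs => h𝒯F s hs.1
      have hSne : S.Nonempty := by
        obtain ⟨s, hs1, hs2⟩ := hnomin t ht𝒯
        exact ⟨s, hs1, hs2⟩
      have hScomp : ∀ a ∈ S, ∀ b ∈ S, comp2 a b := by
        intro a ha b hb
        by_cases hab : a = b
        · exact Or.inl hab
        · exact Or.inr (h𝒯chain ha.1 hb.1 hab)
      obtain ⟨m, hmS, hm⟩ := hA.2.2.1 S hSsub hSne hScomp
      exact ⟨m, hmS.1, hmS.2, fun s hs hund => hm s ⟨hs, hund⟩⟩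
    have hstep : ∀ v : Nd X, (v ∈ 𝒯 ∧ und v ts) →
        ∃ m, (m ∈ 𝒯 ∧ und m ts) ∧ und m v ∧ ∀ s ∈ 𝒯, und s v → (s = m ∨ und s m) := by
      rintro v ⟨hv𝒯, hvts⟩
      obtain ⟨m, hm𝒯, hmund, hmmax⟩ := hsig v hv𝒯
      exact ⟨m, ⟨hm𝒯, und_trans (hGd v hv𝒯) hmund hvts⟩, hmund, hmmax⟩
    obtain ⟨u0, hu0𝒯, hu0und, _⟩ := hsig ts hts𝒯
    let T2 := {v : Nd X // v ∈ 𝒯 ∧ und v ts}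
    let gg : T2 → T2 := fun v => ⟨(hstep v.1 v.2).choose, (hstep v.1 v.2).choose_spec.1⟩
    have ggspec : ∀ v : T2, und (gg v).1 v.1 ∧
        ∀ s ∈ 𝒯, und s v.1 → (s = (gg v).1 ∨ und s (gg v).1) :=
      fun v => (hstep v.1 v.2).choose_spec.2
    let useq : ℕ → T2 := fun k => gg^[k] ⟨u0, hu0𝒯, hu0und⟩
    have huseq : ∀ k, useq (k+1) = gg (useq k) := by
      intro k
      simp only [useq, Function.iterate_succ_apply']
    -- each gg-step is an immediate successor, so indices increase by one
    have hidxstep : ∀ v : T2, (gg v).1.idx = v.1.idx + 1 := by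
      intro v
      have hggv := (gg v).2
      have hv := v.2
      refine hA.2.2.2 (gg v).1 (h𝒯F _ hggv.1) v.1 (h𝒯F _ hv.1) (ggspec v).1 ?_
      rintro w hwF ⟨h1, h2⟩
      have hwE : w ∈ E := ⟨hwF, (h𝒯E hggv.1).2.mono
        (Set.inter_subset_inter_right _ (und_B_sub (hA.1 w hwF) h1))⟩
      have hwcomp : ∀ z ∈ 𝒯, w = z ∨ und w z ∨ und z w := by
        intro z hz
        by_cases hzv : z = v.1
        · exact Or.inr (Or.inl (hzv ▸ h2))
        · rcases h𝒯chain hz hv.1 hzv with hzv1 | hzv1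
          · rcases (ggspec v).2 z hz hzv1 with heq | hzg
            · exact Or.inr (Or.inr (heq ▸ h1))
            · exact Or.inr (Or.inr (und_trans (hGd _ hggv.1) hzg h1))
          · exact Or.inr (Or.inl (und_trans (hGd _ hv.1) h2 hzv1))
      have hw𝒯 : w ∈ 𝒯 := hext w hwE hwcomp
      rcases (ggspec v).2 w hw𝒯 h2 with heq | hw
      · exact und_irrefl (hA.1 w hwF) (by rw [heq] at h1 ⊢; exact heq ▸ h1)
      · exact und_asymm (hGd _ hggv.1) (hA.1 w hwF) h1 hw
    have hidx : ∀ k, (useq k).1.idx = (useq 0).1.idx + k := by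
      intro k
      induction k with
      | zero => rfl
      | succ m ih =>
        rw [huseq m, hidxstep (useq m), ih]
        omega
    have hstrad : ∀ k, (O ∩ (useq k).1.fr).Nonempty := by
      intro k
      have hk𝒯 : (useq k).1 ∈ 𝒯 := (useq k).2.1
      have hkts : und (useq k).1 ts := (useq k).2.2
      have h1 : (O ∩ closure (useq k).1.B).Nonempty :=
        (h𝒯E hk𝒯).2.mono (Set.inter_subset_inter_right _ subset_closure)
      have h2 : (O \ closure (useq k).1.B).Nonempty := by
        obtain ⟨R, hR, hsub⟩ := hkts
        refine htsO.mono (fun x hx => ⟨hx.1, fun hc => hx.2 ?_⟩)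
        exact subset_closure (regs_sub_B (hGd ts hts𝒯) (not_leaf_of_regs hR) hR (hsub hc))
      exact straddle hOpre (hGd _ hk𝒯).1 h1 h2
    obtain ⟨k, hk⟩ := cf_exists n ((useq 0).1.idx)
    obtain ⟨x, hx1, hx2⟩ := hstrad k
    have hxc : x ∈ contrib (useq k).1 n := by
      apply Set.mem_union_right
      rw [if_pos (by rw [hidx k]; exact hk)]
      exact hx2
    exact Set.eq_empty_iff_forall_notMem.mp (hD (useq k).1 (h𝒯F _ (useq k).2.1)) x ⟨hx1, hxc⟩
  · -- Case B
    push_neg at hcaseA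
    have hOsubcl : ∀ t ∈ 𝒯, O ⊆ closure t.B := by
      intro t ht x hx
      by_contra hc
      exact Set.eq_empty_iff_forall_notMem.mp (hcaseA t ht) x ⟨hx, hc⟩
    by_cases hB1 : ∃ t₀ ∈ 𝒯, (O \ t₀.B).Nonempty
    · obtain ⟨t₀, ht₀, hxex⟩ := hB1
      obtain ⟨s₀, hs₀𝒯, hs₀und⟩ := hnomin t₀ ht₀
      obtain ⟨R, hR, hsub⟩ := hs₀und
      obtain ⟨x, hx1, hx2⟩ := hxex
      have hxno : x ∉ closure s₀.B := fun hc =>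
        hx2 (regs_sub_B (hGd t₀ ht₀) (not_leaf_of_regs hR) hR (hsub hc))
      exact Set.eq_empty_iff_forall_notMem.mp (hcaseA s₀ hs₀𝒯) x ⟨hx1, hxno⟩
    · push_neg at hB1
      have hOsub : ∀ t ∈ 𝒯, O ⊆ t.B := by
        intro t ht x hx
        by_contra hc
        exact Set.eq_empty_iff_forall_notMem.mp (hB1 t ht) x ⟨hx, hc⟩
      have hC3 : ∃ s, s ∈ F ∧ (O ∩ s.B).Nonempty ∧ ∀ t ∈ 𝒯, und s t := by
        by_contra hno
        push_neg at hno
        refine key_insert hqr h𝓑 h𝓑2 hni hA hmax hOo hOne (fun s hs hne => ?_)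
        have hsO : (O ∩ s.B).Nonempty := by
          have h := open_inter_closure_nonempty hOo (by rwa [Set.inter_comm] at hne)
          exact h
        by_cases hex2 : ∃ t ∈ 𝒯, und t s
        · obtain ⟨t, ht, h⟩ := hex2
          obtain ⟨R, hR, hsub⟩ := h
          exact ⟨R, hR, (hOsub t ht).trans (subset_closure.trans hsub)⟩
        · exfalso
          push_neg at hex2
          have hcmp : ∀ t ∈ 𝒯, s = t ∨ und s t := by
            intro t ht
            by_cases hst : s = t
            · exact Or.inl hst
            · rcases hA.2.1 s hs t (h𝒯F t ht) hst with hd | h | h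
              · exfalso
                obtain ⟨x, hx1, hx2⟩ := hne
                exact Set.eq_empty_iff_forall_notMem.mp hd x
                  ⟨hx1, subset_closure (hOsub t ht hx2)⟩
              · exact Or.inr h
              · exact (hex2 t ht h).elim
          by_cases hs𝒯 : ∃ t ∈ 𝒯, s = t
          · obtain ⟨t, ht, heq⟩ := hs𝒯
            subst heq
            obtain ⟨w, hw𝒯, hw⟩ := hnomin s ht
            rcases hcmp w hw𝒯 with heq2 | h'
            · exact und_irrefl (hA.1 s hs) (heq2 ▸ hw)
            · exact und_asymm (hA.1 s hs) (hA.1 w (h𝒯F w hw𝒯)) h' hw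
          · push_neg at hs𝒯
            obtain ⟨t, ht, hnosund⟩ := hno s hs hsO
            rcases hcmp t ht with heq | h
            · exact hs𝒯 t ht heq
            · exact hnosund h
      obtain ⟨s, hsF, hsO, hsall⟩ := hC3
      have hs𝒯 : s ∈ 𝒯 := hext s ⟨hsF, hsO⟩ (fun v hv => Or.inr (Or.inl (hsall v hv)))
      exact und_irrefl (hA.1 s hsF) (hsall s hs𝒯)

end Density

end OmegaRes

/-- Let `X` be quasi-regular, have a π-base consisting of connected sets, and have no
non-empty finite open subspace carrying the indiscrete subspace topology (the subspace-open
subsets of such a `U` would be exactly `∅` and `U`, i.e. every open `V` satisfies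
`V ∩ U = ∅` or `U ⊆ V`). Then `X` is `ω`-resolvable: it admits a countably infinite
(ℕ-indexed) family of pairwise disjoint dense subsets. -/
theorem quasiRegular_piConnected_omega_resolvable {X : Type*} [TopologicalSpace X]
    (hqr : ∀ U : Set X, IsOpen U → U.Nonempty →
      ∃ V : Set X, IsOpen V ∧ V.Nonempty ∧ closure V ⊆ U)
    (hpi : ∃ 𝓑 : Set (Set X), (∀ B ∈ 𝓑, IsOpen B ∧ B.Nonempty ∧ IsConnected B) ∧
      ∀ U : Set X, IsOpen U → U.Nonempty → ∃ B ∈ 𝓑, B ⊆ U)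
    (hnoindiscrete : ¬ ∃ U : Set X, IsOpen U ∧ U.Nonempty ∧ U.Finite ∧
      ∀ V : Set X, IsOpen V → V ∩ U = ∅ ∨ U ⊆ V) :
    ∃ D : ℕ → Set X, (∀ n : ℕ, Dense (D n)) ∧ Pairwise (Function.onFun Disjoint D) := by
  classical
  obtain ⟨𝓑, h𝓑, h𝓑2⟩ := hpi
  obtain ⟨F, hA, hmax⟩ := OmegaRes.exists_maximal_Adm (X := X)
  refine ⟨OmegaRes.Dst F, fun n => ?_, OmegaRes.Dst_disj hA⟩
  rw [dense_iff_inter_open]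
  intro U hUo hUne
  obtain ⟨B', hB'mem, hB'sub⟩ := h𝓑2 U hUo hUne
  obtain ⟨hB'o, hB'ne, hB'conn⟩ := h𝓑 B' hB'mem
  have h := OmegaRes.density hqr h𝓑 h𝓑2 hnoindiscrete hA hmax hB'o hB'ne
    hB'conn.isPreconnected n
  exact h.mono (fun x hx => ⟨hB'sub hx.1, hx.2⟩)
end

section
/- Let I be a set and let X be a subspace of the product space ℝ^I such that X is nowhere 0-dimensional, i.e., no non-empty open subspace of X has a basis consisting of clopen sets. Then for every non-empty open set U ⊆ X there exists i ∈ I such that the image π_i[U] under the i-th coordinate projection π_i : ℝ^I → ℝ has non-empty interior in ℝ. In particular, the family {π_i↾X : i ∈ I} of restricted projections is nowhere constant on X. -/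
open Set

theorem aux_key {I : Type*} (X : Set (I → ℝ))
    (h0dim : ∀ U : Set X, IsOpen U → U.Nonempty →
      ¬ ∃ 𝒞 : Set (Set U), (∀ C ∈ 𝒞, IsClopen C) ∧
        TopologicalSpace.IsTopologicalBasis 𝒞) :
    ∀ U : Set X, IsOpen U → U.Nonempty →
      ∃ i : I, (interior ((fun x : X => (x : I → ℝ) i) '' U)).Nonempty := by
  intro U hU hne
  by_contra hcon
  push_neg at hcon
  apply h0dim U hU hne
  refine ⟨{B | IsClopen B}, fun C hC => hC, ?_⟩
  -- the embedding of U into ℝ^I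
  set e : U → (I → ℝ) := fun y => ((y : X) : I → ℝ) with he
  have hce : Continuous e := continuous_subtype_val.comp continuous_subtype_val
  have hind : Topology.IsInducing e :=
    Topology.IsInducing.subtypeVal.comp Topology.IsInducing.subtypeVal
  apply TopologicalSpace.isTopologicalBasis_of_isOpen_of_nhds
  · exact fun B hB => hB.2
  · intro y V hyV hV
    rcases hind.isOpen_iff.mp hV with ⟨W, hW, rfl⟩
    rcases (isOpen_pi_iff.mp hW) (e y) hyV with ⟨s, u, hu, hsub⟩
    -- for each i ∈ s pick interval endpoints outside the projection image
    have claim : ∀ i : I, ∃ a b : ℝ, i ∈ s →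
        a < e y i ∧ e y i < b ∧ Ioo a b ⊆ u i ∧
        a ∉ ((fun x : X => (x : I → ℝ) i) '' U) ∧
        b ∉ ((fun x : X => (x : I → ℝ) i) '' U) := by
      intro i
      by_cases his : i ∈ s
      · obtain ⟨hui, hyi⟩ := hu i his
        rcases Metric.isOpen_iff.mp hui _ hyi with ⟨ε, hε, hball⟩
        have hd : Dense ((fun x : X => (x : I → ℝ) i) '' U)ᶜ := by
          rw [← interior_eq_empty_iff_dense_compl]
          exact hcon i
        obtain ⟨a, ha, haI⟩ := hd.exists_mem_open isOpen_Ioo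
          (nonempty_Ioo.mpr (by linarith : e y i - ε < e y i))
        obtain ⟨b, hb, hbI⟩ := hd.exists_mem_open isOpen_Ioo
          (nonempty_Ioo.mpr (by linarith : e y i < e y i + ε))
        refine ⟨a, b, fun _ => ⟨haI.2, hbI.1, ?_, ha, hb⟩⟩
        intro z hz
        apply hball
        rw [Real.ball_eq_Ioo]
        exact ⟨lt_of_le_of_lt (le_of_lt haI.1) hz.1, lt_of_lt_of_le hz.2 (le_of_lt hbI.2)⟩
      · exact ⟨0, 0, fun h => absurd h his⟩
    choose a b hab using claim
    refine ⟨{z : U | ∀ i ∈ s, e z i ∈ Ioo (a i) (b i)}, ⟨?_, ?_⟩, ?_, ?_⟩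
    · -- closed
      have : {z : U | ∀ i ∈ s, e z i ∈ Ioo (a i) (b i)} =
          {z : U | ∀ i ∈ s, e z i ∈ Icc (a i) (b i)} := by
        ext z
        simp only [mem_setOf_eq]
        constructor
        · exact fun h i hi => Ioo_subset_Icc_self (h i hi)
        · intro h i hi
          obtain ⟨h1, h2, h3, h4, h5⟩ := hab i hi
          have hmem : e z i ∈ ((fun x : X => (x : I → ℝ) i) '' U) :=
            ⟨(z : X), z.2, rfl⟩
          rcases h i hi with ⟨hl, hr⟩
          refine ⟨hl.lt_of_ne fun heq => h4 ?_, hr.lt_of_ne fun heq => h5 ?_⟩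
          · rwa [heq]
          · rwa [← heq]
      rw [this]
      have : {z : U | ∀ i ∈ s, e z i ∈ Icc (a i) (b i)} =
          ⋂ i ∈ s, (fun z : U => e z i) ⁻¹' Icc (a i) (b i) := by
        ext z; simp
      rw [this]
      exact isClosed_biInter fun i _ =>
        IsClosed.preimage ((continuous_apply i).comp hce) isClosed_Icc
    · -- open
      have : {z : U | ∀ i ∈ s, e z i ∈ Ioo (a i) (b i)} =
          ⋂ i ∈ s, (fun z : U => e z i) ⁻¹' Ioo (a i) (b i) := by
        ext z; simp
      rw [this]
      exact isOpen_biInter_finset fun i _ =>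
        IsOpen.preimage ((continuous_apply i).comp hce) isOpen_Ioo
    · -- y mem
      intro i hi
      obtain ⟨h1, h2, _⟩ := hab i hi
      exact ⟨h1, h2⟩
    · -- subset V
      intro z hz
      apply hsub
      intro i hi
      exact (hab i hi).2.2.1 (hz i hi)

/-- Let `X ⊆ ℝ^I` (with the subspace topology) be nowhere 0-dimensional: no non-empty
open subspace of `X` has a basis consisting of clopen sets. Then for every non-empty
open `U ⊆ X` there is `i ∈ I` such that `π_i[U]` has non-empty interior in `ℝ`;
in particular the family of restricted projections `{π_i ↾ X : i ∈ I}` is nowhere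
constant on `X`. -/
theorem nowhere_zero_dimensional_projections {I : Type*} (X : Set (I → ℝ))
    (h0dim : ∀ U : Set X, IsOpen U → U.Nonempty →
      ¬ ∃ 𝒞 : Set (Set U), (∀ C ∈ 𝒞, IsClopen C) ∧
        TopologicalSpace.IsTopologicalBasis 𝒞) :
    (∀ U : Set X, IsOpen U → U.Nonempty →
      ∃ i : I, (interior ((fun x : X => (x : I → ℝ) i) '' U)).Nonempty) ∧
    (∀ U : Set X, IsOpen U → U.Nonempty →
      ∃ i : I, ((fun x : X => (x : I → ℝ) i) '' U).Nontrivial) := by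
  refine ⟨aux_key X h0dim, fun U hU hne => ?_⟩
  obtain ⟨i, x, hx⟩ := aux_key X h0dim U hU hne
  refine ⟨i, x, interior_subset hx, ?_⟩
  rcases Metric.isOpen_iff.mp isOpen_interior x hx with ⟨ε, hε, hball⟩
  refine ⟨x + ε / 2, interior_subset (hball ?_), by linarith⟩
  rw [Metric.mem_ball, Real.dist_eq]
  have h2 : x + ε / 2 - x = ε / 2 := by ring
  rw [h2, abs_of_pos (by linarith)]
  linarith
end
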